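/- arXiv:2510.11071 — 5 statements merged into one kernel-verified Lean document; each statement's English description precedes it below -/
import Mathlib

section
/- For the binary prior case, no posterior estimator can be exactly unbiased: if p : {0,...,n} → [0,1] and α > 0 with α ≠ 1, then the function q ↦ ∑_{k=0}^n p(k) * C(n,k) * q^k * (1-q)^(n-k) (a polynomial in q) cannot equal q ↦ αq/(αq + 1 - q) for all q in (0,1). -/
/-- Impossibility of exact unbiasedness in the binary prior case: no function
`p : {0,...,n} → ℝ` makes the polynomial `q ↦ ∑ₖ p k * C(n,k) qᵏ (1-q)^{n-k}`
equal to the rational function `q ↦ αq/(αq + 1 - q)` on all of `(0,1)`. -/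
theorem no_exact_unbiased_binary (n : ℕ) (α : ℝ) (hα : 0 < α) (hα1 : α ≠ 1)
    (p : Fin (n + 1) → ℝ) :
    ¬ (∀ q ∈ Set.Ioo (0 : ℝ) 1,
      ∑ k : Fin (n + 1), p k * (n.choose k : ℝ) * q ^ (k : ℕ) * (1 - q) ^ (n - (k : ℕ))
        = α * q / (α * q + 1 - q)) := by
  intro h
  set P : Polynomial ℝ := ∑ k : Fin (n + 1),
      Polynomial.C (p k * (n.choose k : ℝ)) * Polynomial.X ^ (k : ℕ) *
        (1 - Polynomial.X) ^ (n - (k : ℕ)) with hP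
  set Q : Polynomial ℝ :=
      P * (Polynomial.C α * Polynomial.X + 1 - Polynomial.X) - Polynomial.C α * Polynomial.X
    with hQdef
  have hQroot : ∀ q ∈ Set.Ioo (0 : ℝ) 1, Polynomial.eval q Q = 0 := by
    intro q hq
    have hd : 0 < α * q + 1 - q := by nlinarith [hq.1, hq.2, mul_pos hα hq.1]
    have hPeval : Polynomial.eval q P = α * q / (α * q + 1 - q) := by
      rw [hP]
      rw [Polynomial.eval_finset_sum]
      simpa using h q hq
    have : Polynomial.eval q Q
        = (α * q / (α * q + 1 - q)) * (α * q + 1 - q) - α * q := by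
      simp [hQdef, hPeval]
    rw [this, div_mul_cancel₀ _ hd.ne']
    ring
  have hQ0 : Q = 0 := by
    apply Polynomial.eq_zero_of_infinite_isRoot
    exact (Set.Ioo_infinite (by norm_num : (0:ℝ) < 1)).mono (fun q hq => hQroot q hq)
  have hne : (1 : ℝ) - α ≠ 0 := sub_ne_zero.mpr (Ne.symm hα1)
  set q₀ : ℝ := (1 - α)⁻¹ with hq₀
  have heval : Polynomial.eval q₀ Q = 0 := by rw [hQ0]; simp
  have hdenom : α * q₀ + 1 - q₀ = 0 := by
    have h1 : (1 - α) * q₀ = 1 := by rw [hq₀]; exact mul_inv_cancel₀ hne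
    linear_combination -h1
  have he : Polynomial.eval q₀ Q = Polynomial.eval q₀ P * (α * q₀ + 1 - q₀) - α * q₀ := by
    simp only [hQdef, Polynomial.eval_sub, Polynomial.eval_add, Polynomial.eval_mul, Polynomial.eval_C, Polynomial.eval_X, Polynomial.eval_one]
  rw [he, hdenom] at heval
  have hz : α * q₀ = 0 := by linarith
  exact mul_ne_zero hα.ne' (inv_ne_zero hne) hz
end

section
/- For the multivariate Bernstein basis b_{n,ν} on the simplex Δ_m and any multi-index α ∈ ℕ^m, the centered moment T_{n,α}(q) := ∑_{ν : ∑νⱼ = n} (ν - n q)^α b_{n,ν}(q) satisfies |T_{n,α}(q)| ≤ C(α, m) · n^{⌊‖α‖₁/2⌋} for all q ∈ Δ_m, where C(α,m) is a constant independent of n. -/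
/-- The multivariate Bernstein basis polynomial `b_{n,ν}(q) = (n!/∏ νⱼ!) ∏ qⱼ^{νⱼ}`. -/
noncomputable def bernBasis {m : ℕ} (ν : Fin m → ℕ) (q : Fin m → ℝ) : ℝ :=
  (Nat.multinomial Finset.univ ν : ℝ) * ∏ j, q j ^ ν j

section AuxiliaryLemmas

open Finset Nat




lemma pascal_mult (m : ℕ) (μ : Fin m → ℕ) (h : ∑ j, μ j ≠ 0) :
    ∑ x ∈ Finset.univ.filter (fun x => μ x ≠ 0),
      Nat.multinomial Finset.univ (Function.update μ x (μ x - 1))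
    = Nat.multinomial Finset.univ μ := by
  have hP : 0 < ∏ j, (μ j) ! := Finset.prod_pos fun j _ => Nat.factorial_pos _
  apply Nat.eq_of_mul_eq_mul_right hP
  have key : ∀ x, μ x ≠ 0 →
      Nat.multinomial Finset.univ (Function.update μ x (μ x - 1)) * ∏ j, (μ j) !
        = (∑ j, μ j - 1) ! * μ x := by
    intro x hx
    have hsum : ∑ j, Function.update μ x (μ x - 1) j = ∑ j, μ j - 1 := by
      rw [Finset.sum_update_of_mem (Finset.mem_univ x)]
      have : ∑ j ∈ Finset.univ \ {x}, μ j + μ x = ∑ j, μ j := by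
        rw [add_comm, ← Finset.sum_eq_add_sum_sdiff_singleton_of_mem (Finset.mem_univ x)]
      omega
    have hprod : (∏ j, (Function.update μ x (μ x - 1) j) !) * μ x = ∏ j, (μ j) ! := by
      simp only [Function.apply_update (fun _ n => n !) μ x (μ x - 1)]
      rw [Finset.prod_update_of_mem (Finset.mem_univ x),
        Finset.prod_eq_prod_diff_singleton_mul (Finset.mem_univ x) (fun j => (μ j) !)]
      rw [mul_comm ((μ x - 1) !), mul_assoc]
      congr 1
      rw [mul_comm, Nat.mul_factorial_pred hx]
    calc Nat.multinomial Finset.univ (Function.update μ x (μ x - 1)) * ∏ j, (μ j) !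
        = Nat.multinomial Finset.univ (Function.update μ x (μ x - 1)) *
            ((∏ j, (Function.update μ x (μ x - 1) j) !) * μ x) := by rw [hprod]
      _ = ((∏ j, (Function.update μ x (μ x - 1) j) !) *
            Nat.multinomial Finset.univ (Function.update μ x (μ x - 1))) * μ x := by ring
      _ = (∑ j, μ j - 1) ! * μ x := by rw [Nat.multinomial_spec, hsum]
  rw [Finset.sum_mul, Finset.sum_congr rfl (fun x hx => key x (Finset.mem_filter.mp hx).2)]
  rw [← Finset.mul_sum, Finset.sum_filter_ne_zero]
  rw [mul_comm (Nat.multinomial _ _), Nat.multinomial_spec]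
  rw [← Nat.mul_factorial_pred h, mul_comm]

/-- fiber count of a function `ω : Fin n → Fin m`. -/
def cnt {m n : ℕ} (ω : Fin n → Fin m) (j : Fin m) : ℕ :=
  (Finset.univ.filter (fun i => ω i = j)).card

lemma cnt_cons {m n : ℕ} (x : Fin m) (ω : Fin n → Fin m) (j : Fin m) :
    cnt (Fin.cons x ω) j = (if x = j then 1 else 0) + cnt ω j := by
  simp only [cnt, Finset.card_filter]
  rw [Fin.sum_univ_succ]
  simp

lemma key_id (m : ℕ) (q : Fin m → ℝ) : ∀ (n : ℕ) (F : (Fin m → ℕ) → ℝ),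
    ∑ ν ∈ Finset.Nat.antidiagonalTuple m n,
      F ν * ((Nat.multinomial Finset.univ ν : ℝ) * ∏ j, q j ^ ν j)
    = ∑ ω : Fin n → Fin m, (∏ i, q (ω i)) * F (cnt ω) := by
  intro n
  induction n with
  | zero =>
    intro F
    rw [Finset.Nat.antidiagonalTuple_zero_right]
    have h0 : cnt (default : Fin 0 → Fin m) = 0 := funext fun j => by simp [cnt]
    simp [h0, Nat.multinomial]
  | succ n ih =>
    intro F
    -- RHS: split off the first coordinate
    rw [← (Fin.consEquiv (fun _ : Fin (n+1) => Fin m)).sum_comp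
      (fun ω => (∏ i, q (ω i)) * F (cnt ω))]
    rw [Fintype.sum_prod_type]
    have rhs_eq : ∀ x : Fin m, ∑ ω : Fin n → Fin m,
        (∏ i, q ((Fin.consEquiv (fun _ : Fin (n+1) => Fin m)) (x, ω) i)) *
          F (cnt ((Fin.consEquiv (fun _ : Fin (n+1) => Fin m)) (x, ω)))
        = q x * ∑ ν ∈ Finset.Nat.antidiagonalTuple m n,
            F (fun j => (if x = j then 1 else 0) + ν j) *
              ((Nat.multinomial Finset.univ ν : ℝ) * ∏ j, q j ^ ν j) := by
      intro x
      rw [ih (fun ν => F (fun j => (if x = j then 1 else 0) + ν j)), Finset.mul_sum]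
      apply Finset.sum_congr rfl
      intro ω _
      have h1 : (Fin.consEquiv (fun _ : Fin (n+1) => Fin m)) (x, ω)
          = (Fin.cons x ω : Fin (n+1) → Fin m) := rfl
      have h2 : (∏ i, q ((Fin.consEquiv (fun _ : Fin (n+1) => Fin m)) (x, ω) i))
          = q x * ∏ i, q (ω i) := by
        rw [h1, Fin.prod_univ_succ]
        simp
      have h3 : cnt ((Fin.consEquiv (fun _ : Fin (n+1) => Fin m)) (x, ω))
          = fun j => (if x = j then 1 else 0) + cnt ω j := by
        rw [h1]; funext j; exact cnt_cons x ω j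
      rw [h2, h3]
      ring
    rw [Finset.sum_congr rfl (fun x _ => rhs_eq x)]
    -- now both sides are sums; use the sigma bijection
    have hL : ∀ μ ∈ Finset.Nat.antidiagonalTuple m (n+1),
        F μ * ((Nat.multinomial Finset.univ μ : ℝ) * ∏ j, q j ^ μ j)
        = ∑ x ∈ Finset.univ.filter (fun x => μ x ≠ 0),
            F μ * ((Nat.multinomial Finset.univ (Function.update μ x (μ x - 1)) : ℝ) *
              ∏ j, q j ^ μ j) := by
      intro μ hμ
      have hs : ∑ j, μ j = n + 1 := Finset.Nat.mem_antidiagonalTuple.mp hμ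
      rw [← pascal_mult m μ (by omega), Nat.cast_sum, Finset.sum_mul, Finset.mul_sum]
    rw [Finset.sum_congr rfl hL]
    simp only [Finset.mul_sum]
    rw [Finset.sum_sigma', Finset.sum_sigma']
    refine Finset.sum_nbij' (i := fun p => ⟨p.2, Function.update p.1 p.2 (p.1 p.2 - 1)⟩)
      (j := fun b => ⟨fun jj => (if b.1 = jj then 1 else 0) + b.2 jj, b.1⟩) ?_ ?_ ?_ ?_ ?_
    · rintro ⟨μ, x⟩ hp
      simp only [Finset.mem_sigma, Finset.mem_filter, Finset.mem_univ, true_and] at hp ⊢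
      obtain ⟨hμ, hx⟩ := hp
      have hs : ∑ j, μ j = n + 1 := Finset.Nat.mem_antidiagonalTuple.mp hμ
      refine Finset.Nat.mem_antidiagonalTuple.mpr ?_
      rw [Finset.sum_update_of_mem (Finset.mem_univ x)]
      have : ∑ j ∈ Finset.univ \ {x}, μ j + μ x = ∑ j, μ j := by
        rw [add_comm, ← Finset.sum_eq_add_sum_sdiff_singleton_of_mem (Finset.mem_univ x)]
      omega
    · rintro ⟨x, ν⟩ hb
      simp only [Finset.mem_sigma, Finset.mem_filter, Finset.mem_univ, true_and] at hb ⊢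
      have hs : ∑ j, ν j = n := Finset.Nat.mem_antidiagonalTuple.mp hb
      constructor
      · refine Finset.Nat.mem_antidiagonalTuple.mpr ?_
        rw [Finset.sum_add_distrib, hs]
        have h1 : ∑ j, (if x = j then 1 else 0) = 1 := by simp
        omega
      · simp
    · rintro ⟨μ, x⟩ hp
      simp only [Finset.mem_sigma, Finset.mem_filter, Finset.mem_univ, true_and] at hp
      obtain ⟨hμ, hx⟩ := hp
      have hfun : (fun jj => (if x = jj then 1 else 0) + Function.update μ x (μ x - 1) jj) = μ := by
        funext jj
        rcases eq_or_ne jj x with h | h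
        · subst h
          simp only [Function.update_self, eq_self_iff_true, if_true]
          omega
        · simp [Function.update_of_ne h, (Ne.symm h)]
      simp only [hfun]
    · rintro ⟨x, ν⟩ hb
      refine congrArg (Sigma.mk x) (funext fun jj => ?_)
      rcases eq_or_ne jj x with h | h
      · subst h
        simp only [Function.update_self, eq_self_iff_true, if_true, if_pos trivial]
        omega
      · simp [Function.update_of_ne h, Ne.symm h]
    · rintro ⟨μ, x⟩ hp
      simp only [Finset.mem_sigma, Finset.mem_filter, Finset.mem_univ, true_and] at hp
      obtain ⟨hμ, hx⟩ := hp
      have hfun : (fun jj => (if x = jj then 1 else 0) + Function.update μ x (μ x - 1) jj) = μ := by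
        funext jj
        rcases eq_or_ne jj x with h | h
        · subst h
          simp only [Function.update_self, eq_self_iff_true, if_true]
          omega
        · simp [Function.update_of_ne h, (Ne.symm h)]
      have hprod : ∏ j, q j ^ μ j = q x * ∏ j, q j ^ Function.update μ x (μ x - 1) j := by
        simp only [Function.apply_update (fun j n => q j ^ n) μ x (μ x - 1)]
        rw [Finset.prod_update_of_mem (Finset.mem_univ x),
          Finset.prod_eq_prod_diff_singleton_mul (Finset.mem_univ x) (fun j => q j ^ μ j)]
        have hqx : q x ^ μ x = q x * q x ^ (μ x - 1) := by
          conv_lhs => rw [← Nat.succ_pred_eq_of_pos (Nat.pos_of_ne_zero hx)]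
          rw [pow_succ, Nat.pred_eq_sub_one]
          ring
        rw [hqx]
        ring
      simp only [hfun, hprod]
      ring

lemma omega_bound (m n : ℕ) (hn : 0 < n) (q : Fin m → ℝ) (hq : ∀ j, 0 ≤ q j)
    (hq1 : ∑ j, q j = 1) (α : Fin m → ℕ) :
    |∑ ω : Fin n → Fin m, (∏ i, q (ω i)) * ∏ j, ((cnt ω j : ℝ) - n * q j) ^ α j|
      ≤ ((((∑ j, α j)/2 + 1) * ((∑ j, α j) + 1) ^ (∑ j, α j) * n ^ ((∑ j, α j)/2) : ℕ) : ℝ) := by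
  classical
  set k := ∑ j, α j with hk
  have hq1' : ∀ j, q j ≤ 1 := by
    intro j
    rw [← hq1]
    exact Finset.single_le_sum (fun i _ => hq i) (Finset.mem_univ j)
  set g : Fin m → Fin m → ℝ := fun x j => (if x = j then 1 else 0) - q j with hg
  have hgabs : ∀ x j, |g x j| ≤ 1 := by
    intro x j
    rw [hg]
    rcases eq_or_ne x j with h | h <;> simp [h, abs_le] <;>
      constructor <;> linarith [hq j, hq1' j]
  have hcardK : Fintype.card ((j : Fin m) × Fin (α j)) = k := by
    simp [Fintype.card_sigma, hk]
  -- Step B1: expand the product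
  have step1 : ∀ ω : Fin n → Fin m,
      ∏ j, ((cnt ω j : ℝ) - n * q j) ^ α j
        = ∑ a : ((j : Fin m) × Fin (α j)) → Fin n, ∏ κ, g (ω (a κ)) κ.1 := by
    intro ω
    have e1 : ∀ j, (cnt ω j : ℝ) - n * q j = ∑ i : Fin n, g (ω i) j := by
      intro j
      have hc : (cnt ω j : ℝ) = ∑ i : Fin n, (if ω i = j then (1:ℝ) else 0) := by
        rw [cnt, Finset.card_filter]
        push_cast
        rfl
      rw [hg]
      simp only [Finset.sum_sub_distrib]
      rw [← hc, Finset.sum_const, Finset.card_univ, Fintype.card_fin, nsmul_eq_mul]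
    have e2 : ∏ j, ((cnt ω j : ℝ) - n * q j) ^ α j
        = ∏ κ : (j : Fin m) × Fin (α j), ∑ i : Fin n, g (ω i) κ.1 := by
      rw [← Finset.univ_sigma_univ, Finset.prod_sigma]
      apply Finset.prod_congr rfl
      intro j _
      rw [e1 j]
      have hr : ∏ s : Fin (α j), (∑ i : Fin n, g (ω i) (⟨j, s⟩ : (j : Fin m) × Fin (α j)).fst)
          = ∏ s : Fin (α j), ∑ i : Fin n, g (ω i) j := rfl
      rw [hr, Finset.prod_const, Finset.card_univ, Fintype.card_fin]
    rw [e2, Finset.prod_univ_sum]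
    rw [Fintype.piFinset_univ]
  -- Step B2: swap sums, factor over coordinates
  set E : (((j : Fin m) × Fin (α j)) → Fin n) → Fin n → ℝ :=
    fun a i => ∑ x, q x * ∏ κ ∈ Finset.univ.filter (fun κ => a κ = i), g x κ.1 with hE
  have step2 : ∑ ω : Fin n → Fin m, (∏ i, q (ω i)) * ∏ j, ((cnt ω j : ℝ) - n * q j) ^ α j
      = ∑ a : ((j : Fin m) × Fin (α j)) → Fin n, ∏ i, E a i := by
    simp only [fun ω => step1 ω, Finset.mul_sum]
    rw [Finset.sum_comm]
    apply Finset.sum_congr rfl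
    intro a _
    have inner : ∀ ω : Fin n → Fin m,
        (∏ i, q (ω i)) * ∏ κ, g (ω (a κ)) κ.1
          = ∏ i, (q (ω i) * ∏ κ ∈ Finset.univ.filter (fun κ => a κ = i), g (ω i) κ.1) := by
      intro ω
      rw [Finset.prod_mul_distrib]
      congr 1
      rw [← Finset.prod_fiberwise_of_maps_to (g := a) (fun κ _ => Finset.mem_univ (a κ))
        (fun κ => g (ω (a κ)) κ.1)]
      apply Finset.prod_congr rfl
      intro i _
      apply Finset.prod_congr rfl
      intro κ hκ
      rw [(Finset.mem_filter.mp hκ).2]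
    rw [Finset.sum_congr rfl (fun ω _ => inner ω)]
    rw [← Fintype.piFinset_univ]
    exact (Finset.prod_univ_sum (fun _ : Fin n => (Finset.univ : Finset (Fin m)))
      (fun i y => q y * ∏ κ ∈ Finset.univ.filter (fun κ => a κ = i), g y κ.1)).symm
  rw [step2]
  -- the "good" assignments
  set Good : Finset (((j : Fin m) × Fin (α j)) → Fin n) :=
    Finset.univ.filter
      (fun a => ∀ i, (Finset.univ.filter (fun κ => a κ = i)).card ≠ 1) with hGood
  have hE1 : ∀ a i, |E a i| ≤ 1 := by
    intro a i
    rw [hE]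
    calc |∑ x, q x * ∏ κ ∈ Finset.univ.filter (fun κ => a κ = i), g x κ.1|
        ≤ ∑ x, |q x * ∏ κ ∈ Finset.univ.filter (fun κ => a κ = i), g x κ.1| :=
          Finset.abs_sum_le_sum_abs _ _
      _ ≤ ∑ x, q x := by
          apply Finset.sum_le_sum
          intro x _
          rw [abs_mul, abs_of_nonneg (hq x)]
          calc q x * |∏ κ ∈ Finset.univ.filter (fun κ => a κ = i), g x κ.1|
              ≤ q x * 1 := by
                apply mul_le_mul_of_nonneg_left _ (hq x)
                rw [Finset.abs_prod]
                exact Finset.prod_le_one (fun κ _ => abs_nonneg _) (fun κ _ => hgabs x κ.1)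
            _ = q x := mul_one _
      _ = 1 := hq1
  have hE0 : ∀ a i, (Finset.univ.filter (fun κ => a κ = i)).card = 1 → E a i = 0 := by
    intro a i hcard
    obtain ⟨κ₀, hκ₀⟩ := Finset.card_eq_one.mp hcard
    rw [hE]
    simp only [hκ₀, Finset.prod_singleton, hg]
    rw [Finset.sum_congr rfl (fun x _ => mul_sub (q x) _ _), Finset.sum_sub_distrib]
    have h1 : ∑ x, q x * (if x = κ₀.1 then (1:ℝ) else 0) = q κ₀.1 := by
      simp [mul_ite]
    have h2 : ∑ x, q x * q κ₀.1 = q κ₀.1 := by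
      rw [← Finset.sum_mul, hq1, one_mul]
    rw [h1, h2, sub_self]
  -- bound the sum by the number of good assignments
  have bound1 : |∑ a : ((j : Fin m) × Fin (α j)) → Fin n, ∏ i, E a i| ≤ Good.card := by
    calc |∑ a : ((j : Fin m) × Fin (α j)) → Fin n, ∏ i, E a i|
        ≤ ∑ a : ((j : Fin m) × Fin (α j)) → Fin n, |∏ i, E a i| :=
          Finset.abs_sum_le_sum_abs _ _
      _ ≤ ∑ a : ((j : Fin m) × Fin (α j)) → Fin n, (if a ∈ Good then (1:ℝ) else 0) := by
          apply Finset.sum_le_sum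
          intro a _
          by_cases ha : a ∈ Good
          · rw [if_pos ha, Finset.abs_prod]
            exact Finset.prod_le_one (fun i _ => abs_nonneg _) (fun i _ => hE1 a i)
          · rw [if_neg ha]
            rw [hGood, Finset.mem_filter] at ha
            push_neg at ha
            obtain ⟨i, hi⟩ := ha (Finset.mem_univ a)
            have hz : ∏ i, E a i = 0 :=
              Finset.prod_eq_zero (Finset.mem_univ i) (hE0 a i hi)
            rw [hz, abs_zero]
      _ = Good.card := by
          rw [Finset.sum_ite_mem, Finset.univ_inter, Finset.sum_const, nsmul_eq_mul, mul_one]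
  -- Step C: count the good assignments
  have cardGood : Good.card ≤ (k/2 + 1) * (k+1)^k * n^(k/2) := by
    set r := k/2 with hr
    set S : Finset (Finset (Fin n)) := Finset.univ.powerset.filter (fun s => s.card ≤ r) with hS
    have hsub : Good ⊆ S.biUnion (fun s => Fintype.piFinset (fun _ => s)) := by
      intro a ha
      rw [Finset.mem_biUnion]
      refine ⟨Finset.image a Finset.univ, ?_, ?_⟩
      · rw [hS, Finset.mem_filter]
        refine ⟨Finset.mem_powerset.mpr (Finset.subset_univ _), ?_⟩
        have hcount : Fintype.card ((j : Fin m) × Fin (α j))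
            = ∑ i ∈ Finset.image a Finset.univ,
                (Finset.univ.filter (fun κ => a κ = i)).card := by
          rw [← Finset.card_univ]
          exact Finset.card_eq_sum_card_fiberwise
            (fun κ _ => Finset.mem_image_of_mem a (Finset.mem_univ κ))
        have h2 : ∀ i ∈ Finset.image a Finset.univ,
            2 ≤ (Finset.univ.filter (fun κ => a κ = i)).card := by
          intro i hi
          obtain ⟨κ, _, hκ⟩ := Finset.mem_image.mp hi
          have hne : (Finset.univ.filter (fun κ' => a κ' = i)).Nonempty :=
            ⟨κ, by simp [hκ]⟩
          have hpos := Finset.card_pos.mpr hne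
          have hne1 := (Finset.mem_filter.mp ha).2 i
          omega
        have hkk : 2 * (Finset.image a Finset.univ).card ≤ k := by
          calc 2 * (Finset.image a Finset.univ).card
              = ∑ _i ∈ Finset.image a Finset.univ, 2 := by
                rw [Finset.sum_const, smul_eq_mul, mul_comm]
            _ ≤ ∑ i ∈ Finset.image a Finset.univ,
                  (Finset.univ.filter (fun κ => a κ = i)).card := Finset.sum_le_sum h2
            _ = Fintype.card ((j : Fin m) × Fin (α j)) := hcount.symm
            _ = k := hcardK
        omega
      · rw [Fintype.mem_piFinset]
        exact fun κ => Finset.mem_image_of_mem a (Finset.mem_univ κ)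
    have hcard1 : Good.card
        ≤ ∑ s ∈ S, (Fintype.piFinset (fun _ : ((j : Fin m) × Fin (α j)) => s)).card :=
      le_trans (Finset.card_le_card hsub) Finset.card_biUnion_le
    have hcard2 : ∀ s ∈ S,
        (Fintype.piFinset (fun _ : ((j : Fin m) × Fin (α j)) => s)).card ≤ (k+1)^k := by
      intro s hs
      rw [Fintype.card_piFinset, Finset.prod_const, Finset.card_univ, hcardK]
      have hsr : s.card ≤ k + 1 := by
        have := (Finset.mem_filter.mp hs).2
        omega
      exact Nat.pow_le_pow_left hsr k
    have hScard : S.card ≤ (r+1) * n^r := by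
      have hsub2 : S ⊆ (Finset.range (r+1)).biUnion
          (fun j => Finset.powersetCard j Finset.univ) := by
        intro s hs
        rw [Finset.mem_biUnion]
        exact ⟨s.card, Finset.mem_range.mpr (Nat.lt_succ_of_le (Finset.mem_filter.mp hs).2),
          Finset.mem_powersetCard.mpr ⟨Finset.subset_univ _, rfl⟩⟩
      calc S.card ≤ _ := Finset.card_le_card hsub2
        _ ≤ ∑ j ∈ Finset.range (r+1), (Finset.powersetCard j Finset.univ).card :=
            Finset.card_biUnion_le
        _ ≤ ∑ _j ∈ Finset.range (r+1), n^r := by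
            apply Finset.sum_le_sum
            intro j hj
            rw [Finset.card_powersetCard, Finset.card_univ, Fintype.card_fin]
            calc n.choose j ≤ n ^ j := Nat.choose_le_pow n j
              _ ≤ n ^ r := Nat.pow_le_pow_right hn (by
                  have := Finset.mem_range.mp hj
                  omega)
        _ = (r+1) * n^r := by rw [Finset.sum_const, Finset.card_range, smul_eq_mul]
    calc Good.card ≤ _ := hcard1
      _ ≤ ∑ _s ∈ S, (k+1)^k := Finset.sum_le_sum hcard2
      _ = S.card * (k+1)^k := by rw [Finset.sum_const, smul_eq_mul]
      _ ≤ ((r+1) * n^r) * (k+1)^k := Nat.mul_le_mul_right _ hScard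
      _ = (k/2+1) * (k+1)^k * n^(k/2) := by rw [hr]; ring
  calc |∑ a : ((j : Fin m) × Fin (α j)) → Fin n, ∏ i, E a i|
      ≤ (Good.card : ℝ) := bound1
    _ ≤ _ := by exact_mod_cast cardGood

end AuxiliaryLemmas

/-- Centered multinomial moment bound: for any multi-index `α`,
`|∑_ν (ν - nq)^α b_{n,ν}(q)| ≤ C(α,m) · n^{⌊‖α‖₁/2⌋}` uniformly over the simplex,
with `C` independent of `n`. -/
theorem bernstein_centered_moment_bound (m : ℕ) (α : Fin m → ℕ) :
    ∃ C : ℝ, 0 < C ∧ ∀ n : ℕ, 0 < n → ∀ q : Fin m → ℝ,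
      (∀ j, 0 ≤ q j) → (∑ j, q j = 1) →
      |∑ ν ∈ Finset.Nat.antidiagonalTuple m n,
          (∏ j, ((ν j : ℝ) - n * q j) ^ α j) * bernBasis ν q|
        ≤ C * (n : ℝ) ^ ((∑ j, α j) / 2) := by
  refine ⟨((((∑ j, α j)/2 + 1) * ((∑ j, α j) + 1) ^ (∑ j, α j) : ℕ) : ℝ),
    Nat.cast_pos.mpr (by positivity), ?_⟩
  intro n hn q hq hq1
  have hkey := key_id m q n (fun ν => ∏ j, ((ν j : ℝ) - n * q j) ^ α j)
  simp only [bernBasis]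
  rw [hkey]
  calc |∑ ω : Fin n → Fin m, (∏ i, q (ω i)) * ∏ j, ((cnt ω j : ℝ) - n * q j) ^ α j|
      ≤ ((((∑ j, α j)/2 + 1) * ((∑ j, α j) + 1) ^ (∑ j, α j) * n ^ ((∑ j, α j)/2) : ℕ) : ℝ) :=
        omega_bound m n hn q hq hq1 α
    _ = ((((∑ j, α j)/2 + 1) * ((∑ j, α j) + 1) ^ (∑ j, α j) : ℕ) : ℝ)
          * (n : ℝ) ^ ((∑ j, α j) / 2) := by push_cast; ring
end

section
/- Equivalently in normalized form: for T ~ Multinomial(n, q) with q in the simplex Δ_m and any multi-index α, |E[∏ⱼ (Tⱼ/n - qⱼ)^{αⱼ}]| ≤ C(α,m) · n^{-‖α‖₁/2}. -/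
open Finset


/-- count of value `j` in tuple `ω` -/
def cntBB {n m : ℕ} (ω : Fin n → Fin m) (j : Fin m) : ℕ :=
  (Finset.univ.filter fun i => ω i = j).card

lemma cntBB_cons {n m : ℕ} (c : Fin m) (ω : Fin n → Fin m) (j : Fin m) :
    cntBB (Fin.cons c ω) j = (if c = j then 1 else 0) + cntBB ω j := by
  simp only [cntBB, Finset.card_filter, Fin.sum_univ_succ, Fin.cons_zero, Fin.cons_succ]

lemma sum_cntBB {n m : ℕ} (ω : Fin n → Fin m) : ∑ j, cntBB ω j = n := by
  classical
  have := Finset.card_eq_sum_card_fiberwise (f := ω) (s := Finset.univ) (t := Finset.univ)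
    (fun x _ => Finset.mem_univ _)
  simpa [cntBB] using this.symm

lemma mulnom_P1 {m : ℕ} (ν : Fin m → ℕ) (c : Fin m) (hc : ν c ≠ 0) :
    (∑ j, ν j) * Nat.multinomial Finset.univ (Function.update ν c (ν c - 1))
      = ν c * Nat.multinomial Finset.univ ν := by
  classical
  set u := Function.update ν c (ν c - 1) with hu
  have hsum : ∑ j, u j = (∑ j, ν j) - 1 := by
    rw [hu, Finset.sum_update_of_mem (Finset.mem_univ c)]
    have h2 : ∑ j, ν j = ν c + ∑ j ∈ Finset.univ.erase c, ν j :=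
      (Finset.add_sum_erase _ ν (Finset.mem_univ c)).symm
    rw [Finset.erase_eq] at h2
    omega
  have hfact : ν c * ∏ j, Nat.factorial (u j) = ∏ j, Nat.factorial (ν j) := by
    have hup : (fun j => Nat.factorial (Function.update ν c (ν c - 1) j))
        = Function.update (fun j => Nat.factorial (ν j)) c (Nat.factorial (ν c - 1)) :=
      funext fun j => Function.apply_update (fun _ k => Nat.factorial k) ν c _ j
    rw [hu]
    show ν c * ∏ j, (fun j => Nat.factorial (Function.update ν c (ν c - 1) j)) j = _
    rw [hup, Finset.prod_update_of_mem (Finset.mem_univ c),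
      ← Finset.mul_prod_erase _ (fun j => Nat.factorial (ν j)) (Finset.mem_univ c), ← mul_assoc,
      Nat.mul_factorial_pred hc]
    simp [Finset.erase_eq]
  have key := Nat.multinomial_spec Finset.univ u
  have key2 := Nat.multinomial_spec Finset.univ ν
  have hpos : 0 < ∏ j, Nat.factorial (u j) := Finset.prod_pos fun j _ => Nat.factorial_pos _
  apply Nat.eq_of_mul_eq_mul_left hpos
  have hN : 0 < ∑ j, ν j := by
    have : ν c ≤ ∑ j, ν j := Finset.single_le_sum (f := ν) (fun j _ => Nat.zero_le _) (Finset.mem_univ c)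
    omega
  calc (∏ j, Nat.factorial (u j)) * ((∑ j, ν j) * Nat.multinomial Finset.univ u)
      = (∑ j, ν j) * ((∏ j, Nat.factorial (u j)) * Nat.multinomial Finset.univ u) := by ring
    _ = (∑ j, ν j) * Nat.factorial ((∑ j, ν j) - 1) := by rw [key, hsum]
    _ = Nat.factorial (∑ j, ν j) := Nat.mul_factorial_pred hN.ne'
    _ = (∏ j, Nat.factorial (ν j)) * Nat.multinomial Finset.univ ν := key2.symm
    _ = (ν c * ∏ j, Nat.factorial (u j)) * Nat.multinomial Finset.univ ν := by rw [hfact]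
    _ = (∏ j, Nat.factorial (u j)) * (ν c * Nat.multinomial Finset.univ ν) := by ring

lemma mulnom_pascal {m : ℕ} (ν : Fin m → ℕ) (h0 : ∑ j, ν j ≠ 0) :
    ∑ c ∈ Finset.univ.filter (fun c => ν c ≠ 0),
        Nat.multinomial Finset.univ (Function.update ν c (ν c - 1))
      = Nat.multinomial Finset.univ ν := by
  classical
  apply Nat.eq_of_mul_eq_mul_left (Nat.pos_of_ne_zero h0)
  rw [Finset.mul_sum]
  calc ∑ c ∈ Finset.univ.filter (fun c => ν c ≠ 0),
        (∑ j, ν j) * Nat.multinomial Finset.univ (Function.update ν c (ν c - 1))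
      = ∑ c ∈ Finset.univ.filter (fun c => ν c ≠ 0), ν c * Nat.multinomial Finset.univ ν := by
        refine Finset.sum_congr rfl fun c hc => ?_
        exact mulnom_P1 ν c (Finset.mem_filter.1 hc).2
    _ = (∑ c ∈ Finset.univ.filter (fun c => ν c ≠ 0), ν c) * Nat.multinomial Finset.univ ν := by
        rw [Finset.sum_mul]
    _ = (∑ j, ν j) * Nat.multinomial Finset.univ ν := by
        congr 1
        exact Finset.sum_filter_ne_zero Finset.univ




lemma cntBB_cons_eq_iff {n m : ℕ} (c : Fin m) (ω : Fin n → Fin m) (ν : Fin m → ℕ) :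
    cntBB (Fin.cons c ω) = ν ↔ ν c ≠ 0 ∧ cntBB ω = Function.update ν c (ν c - 1) := by
  constructor
  · intro h
    have hc : (1 : ℕ) + cntBB ω c = ν c := by
      have := congrFun h c; rwa [cntBB_cons, if_pos rfl] at this
    refine ⟨by omega, funext fun j => ?_⟩
    by_cases hj : j = c
    · subst hj; rw [Function.update_self]; omega
    · rw [Function.update_of_ne hj]
      have := congrFun h j
      rwa [cntBB_cons, if_neg (fun hcj => hj hcj.symm), zero_add] at this
  · rintro ⟨h0, h⟩
    funext j
    rw [cntBB_cons, h]
    by_cases hj : c = j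
    · subst hj; rw [if_pos rfl, Function.update_self]; omega
    · rw [if_neg hj, Function.update_of_ne (fun hcj => hj hcj.symm), zero_add]

lemma fiber_sum_eq (q : Fin m → ℝ) : ∀ (n : ℕ) (ν : Fin m → ℕ), ∑ j, ν j = n →
    ∑ ω ∈ Finset.univ.filter (fun ω : Fin n → Fin m => cntBB ω = ν), ∏ i, q (ω i)
      = (Nat.multinomial Finset.univ ν : ℝ) * ∏ j, q j ^ ν j := by
  intro n
  induction n with
  | zero =>
    intro ν hν
    have hν0 : ν = fun _ => 0 := by
      funext j
      exact Finset.sum_eq_zero_iff.mp hν j (Finset.mem_univ j)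
    subst hν0
    have hfil : Finset.univ.filter (fun ω : Fin 0 → Fin m => cntBB ω = fun _ => 0)
        = Finset.univ := by
      refine Finset.filter_true_of_mem fun ω _ => funext fun j => ?_
      simp [cntBB]
    rw [hfil]
    have hm : Nat.multinomial (Finset.univ : Finset (Fin m)) (fun _ => 0) = 1 := by
      simp [Nat.multinomial]
    simp [hm]
  | succ n ih =>
    intro ν hν
    -- reindex by (c, ω') ↦ Fin.cons c ω'
    rw [Finset.sum_filter]
    rw [← Fintype.sum_equiv (Fin.consEquiv (fun _ : Fin (n+1) => Fin m))
      (fun x : Fin m × (Fin n → Fin m) =>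
        if cntBB (Fin.cons x.1 x.2 : Fin (n+1) → Fin m) = ν
        then ∏ i, q ((Fin.cons x.1 x.2 : Fin (n+1) → Fin m) i) else 0)
      (fun ω => if cntBB ω = ν then ∏ i, q (ω i) else 0)
      (fun x => by rfl)]
    rw [Fintype.sum_prod_type]
    have hterm : ∀ c : Fin m, ∑ ω' : Fin n → Fin m,
        (if cntBB (Fin.cons c ω' : Fin (n+1) → Fin m) = ν
          then ∏ i, q ((Fin.cons c ω' : Fin (n+1) → Fin m) i) else 0)
        = if ν c ≠ 0 then q c * ((Nat.multinomial Finset.univ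
            (Function.update ν c (ν c - 1)) : ℝ)
            * ∏ j, q j ^ (Function.update ν c (ν c - 1)) j) else 0 := by
      intro c
      by_cases hc : ν c ≠ 0
      · rw [if_pos hc]
        have : ∀ ω' : Fin n → Fin m,
            (if cntBB (Fin.cons c ω' : Fin (n+1) → Fin m) = ν
              then ∏ i, q ((Fin.cons c ω' : Fin (n+1) → Fin m) i) else 0)
            = if cntBB ω' = Function.update ν c (ν c - 1)
                then q c * ∏ i, q (ω' i) else 0 := by
          intro ω'
          rw [Fin.prod_univ_succ]
          simp only [Fin.cons_zero, Fin.cons_succ]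
          congr 1
          · simp only [eq_iff_iff, cntBB_cons_eq_iff]
            tauto
        rw [Finset.sum_congr rfl (fun ω' _ => this ω'), ← Finset.sum_filter]
        rw [← Finset.mul_sum]
        congr 1
        apply ih
        have h2 : ∑ j, Function.update ν c (ν c - 1) j = (∑ j, ν j) - 1 := by
          rw [Finset.sum_update_of_mem (Finset.mem_univ c)]
          have h3 : ∑ j, ν j = ν c + ∑ j ∈ Finset.univ \ {c}, ν j := by
            rw [← Finset.erase_eq]
            exact (Finset.add_sum_erase _ ν (Finset.mem_univ c)).symm
          omega
        omega
      · rw [if_neg hc]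
        apply Finset.sum_eq_zero
        intro ω' _
        rw [if_neg]
        rw [cntBB_cons_eq_iff]
        tauto
    rw [Finset.sum_congr rfl (fun c _ => hterm c)]
    rw [← Finset.sum_filter]
    have hfac : ∀ c ∈ Finset.univ.filter (fun c => ν c ≠ 0),
        q c * ((Nat.multinomial Finset.univ (Function.update ν c (ν c - 1)) : ℝ)
          * ∏ j, q j ^ (Function.update ν c (ν c - 1)) j)
        = (Nat.multinomial Finset.univ (Function.update ν c (ν c - 1)) : ℝ)
          * ∏ j, q j ^ ν j := by
      intro c hc
      have hc' : ν c ≠ 0 := (Finset.mem_filter.1 hc).2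
      have hprod : q c * ∏ j, q j ^ (Function.update ν c (ν c - 1)) j = ∏ j, q j ^ ν j := by
        have hup : (fun j => q j ^ (Function.update ν c (ν c - 1)) j)
            = Function.update (fun j => q j ^ ν j) c (q c ^ (ν c - 1)) := by
          funext j
          by_cases hj : j = c
          · subst hj; simp
          · simp [Function.update_of_ne hj]
        rw [hup, Finset.prod_update_of_mem (Finset.mem_univ c), ← mul_assoc]
        have : q c * q c ^ (ν c - 1) = q c ^ ν c := by
          rw [← pow_succ']
          congr 1
          omega
        rw [this, ← Finset.erase_eq,
          Finset.mul_prod_erase _ (fun j => q j ^ ν j) (Finset.mem_univ c)]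
      calc q c * ((Nat.multinomial Finset.univ (Function.update ν c (ν c - 1)) : ℝ)
            * ∏ j, q j ^ (Function.update ν c (ν c - 1)) j)
          = (Nat.multinomial Finset.univ (Function.update ν c (ν c - 1)) : ℝ)
            * (q c * ∏ j, q j ^ (Function.update ν c (ν c - 1)) j) := by ring
        _ = _ := by rw [hprod]
    rw [Finset.sum_congr rfl hfac, ← Finset.sum_mul]
    congr 1
    rw [← Nat.cast_sum]
    rw [mulnom_pascal ν (by omega)]




lemma group_sum (n m : ℕ) (q : Fin m → ℝ) (F : (Fin m → ℕ) → ℝ) :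
    ∑ ν ∈ Finset.Nat.antidiagonalTuple m n,
        F ν * ((Nat.multinomial Finset.univ ν : ℝ) * ∏ j, q j ^ ν j)
      = ∑ ω : Fin n → Fin m, (∏ i, q (ω i)) * F (cntBB ω) := by
  classical
  rw [← Finset.sum_fiberwise_of_maps_to (g := cntBB) (t := Finset.Nat.antidiagonalTuple m n)
    (fun ω _ => Finset.Nat.mem_antidiagonalTuple.2 (sum_cntBB ω))
    (fun ω => (∏ i, q (ω i)) * F (cntBB ω))]
  refine Finset.sum_congr rfl fun ν hν => ?_
  have hsum : ∑ j, ν j = n := Finset.Nat.mem_antidiagonalTuple.1 hν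
  refine Eq.symm ?_
  calc ∑ ω ∈ Finset.univ.filter (fun ω : Fin n → Fin m => cntBB ω = ν),
        (∏ i, q (ω i)) * F (cntBB ω)
      = ∑ ω ∈ Finset.univ.filter (fun ω : Fin n → Fin m => cntBB ω = ν),
        (∏ i, q (ω i)) * F ν := by
        refine Finset.sum_congr rfl fun ω hω => ?_
        rw [(Finset.mem_filter.1 hω).2]
    _ = (∑ ω ∈ Finset.univ.filter (fun ω : Fin n → Fin m => cntBB ω = ν),
        ∏ i, q (ω i)) * F ν := by rw [Finset.sum_mul]
    _ = _ := by rw [fiber_sum_eq q n ν hsum]; ring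

lemma expand_prod (n m : ℕ) (hn : 0 < n) (q : Fin m → ℝ) (α : Fin m → ℕ)
    (ω : Fin n → Fin m) :
    ∏ j, ((cntBB ω j : ℝ) / n - q j) ^ α j
      = (1 / n : ℝ) ^ (∑ j, α j) *
        ∑ g : (Σ j : Fin m, Fin (α j)) → Fin n,
          ∏ p : (Σ j : Fin m, Fin (α j)), ((if ω (g p) = p.1 then (1:ℝ) else 0) - q p.1) := by
  classical
  have hn' : (n : ℝ) ≠ 0 := Nat.cast_ne_zero.2 hn.ne'
  have h1 : ∀ j, ((cntBB ω j : ℝ) / n - q j)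
      = (1 / n) * ∑ i, ((if ω i = j then (1:ℝ) else 0) - q j) := by
    intro j
    have hc : (cntBB ω j : ℝ) = ∑ i, (if ω i = j then (1:ℝ) else 0) := by
      rw [cntBB, Finset.card_filter]
      push_cast
      refine Finset.sum_congr rfl fun i _ => ?_
      split_ifs <;> norm_num
    rw [Finset.sum_sub_distrib, Finset.sum_const, Finset.card_univ, Fintype.card_fin, ← hc]
    field_simp
    rw [nsmul_eq_mul]
  calc ∏ j, ((cntBB ω j : ℝ) / n - q j) ^ α j
      = ∏ j, ((1/n : ℝ) ^ α j * (∑ i, ((if ω i = j then (1:ℝ) else 0) - q j)) ^ α j) := by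
        refine Finset.prod_congr rfl fun j _ => ?_
        rw [h1 j, mul_pow]
    _ = (1/n : ℝ) ^ (∑ j, α j) *
        ∏ j, (∑ i, ((if ω i = j then (1:ℝ) else 0) - q j)) ^ α j := by
        rw [Finset.prod_mul_distrib, Finset.prod_pow_eq_pow_sum]
    _ = _ := by
        congr 1
        calc ∏ j, (∑ i, ((if ω i = j then (1:ℝ) else 0) - q j)) ^ α j
            = ∏ p : (Σ j : Fin m, Fin (α j)),
                ∑ i, ((if ω i = p.1 then (1:ℝ) else 0) - q p.1) := by
              rw [← Finset.univ_sigma_univ, Finset.prod_sigma]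
              refine Finset.prod_congr rfl fun j _ => ?_
              simp [Finset.prod_const]
          _ = _ := by
              rw [Finset.prod_univ_sum]
              rw [Fintype.piFinset_univ]



section
variable {n m : ℕ} {α : Fin m → ℕ}

/-- the factor `e i` for a given assignment `g` -/
noncomputable def eFac (q : Fin m → ℝ) (g : (Σ j : Fin m, Fin (α j)) → Fin n) (i : Fin n) : ℝ :=
  ∑ c : Fin m, q c * ∏ p ∈ Finset.univ.filter (fun p => g p = i),
    ((if c = p.1 then (1:ℝ) else 0) - q p.1)

lemma Efactor (q : Fin m → ℝ) (g : (Σ j : Fin m, Fin (α j)) → Fin n) :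
    ∑ ω : Fin n → Fin m, (∏ i, q (ω i)) *
        ∏ p : (Σ j : Fin m, Fin (α j)), ((if ω (g p) = p.1 then (1:ℝ) else 0) - q p.1)
      = ∏ i : Fin n, eFac q g i := by
  classical
  have key : ∀ ω : Fin n → Fin m,
      ∏ p : (Σ j : Fin m, Fin (α j)), ((if ω (g p) = p.1 then (1:ℝ) else 0) - q p.1)
      = ∏ i : Fin n, ∏ p ∈ Finset.univ.filter (fun p => g p = i),
          ((if ω i = p.1 then (1:ℝ) else 0) - q p.1) := by
    intro ω
    rw [← Finset.prod_fiberwise_of_maps_to (g := g) (fun p _ => Finset.mem_univ _)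
      (fun p => (if ω (g p) = p.1 then (1:ℝ) else 0) - q p.1)]
    refine Finset.prod_congr rfl fun i _ => Finset.prod_congr rfl fun p hp => ?_
    rw [(Finset.mem_filter.1 hp).2]
  calc ∑ ω : Fin n → Fin m, (∏ i, q (ω i)) *
        ∏ p : (Σ j : Fin m, Fin (α j)), ((if ω (g p) = p.1 then (1:ℝ) else 0) - q p.1)
      = ∑ ω : Fin n → Fin m, ∏ i, (q (ω i) * ∏ p ∈ Finset.univ.filter (fun p => g p = i),
          ((if ω i = p.1 then (1:ℝ) else 0) - q p.1)) := by
        refine Finset.sum_congr rfl fun ω _ => ?_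
        rw [key ω, Finset.prod_mul_distrib]
    _ = ∏ i : Fin n, eFac q g i := by
        unfold eFac
        rw [Finset.prod_univ_sum, Fintype.piFinset_univ]

lemma abs_factor_le (q : Fin m → ℝ) (hq0 : ∀ j, 0 ≤ q j) (hq1 : ∑ j, q j = 1)
    (c j : Fin m) : |(if c = j then (1:ℝ) else 0) - q j| ≤ 1 := by
  have h0 : 0 ≤ q j := hq0 j
  have h1 : q j ≤ 1 := hq1 ▸ Finset.single_le_sum (f := q) (fun j _ => hq0 j) (Finset.mem_univ j)
  split_ifs with h <;> rw [abs_le] <;> constructor <;> linarith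

lemma abs_eFac_le (q : Fin m → ℝ) (hq0 : ∀ j, 0 ≤ q j) (hq1 : ∑ j, q j = 1)
    (g : (Σ j : Fin m, Fin (α j)) → Fin n) (i : Fin n) : |eFac q g i| ≤ 1 := by
  classical
  calc |eFac q g i| ≤ ∑ c : Fin m, |q c * ∏ p ∈ Finset.univ.filter (fun p => g p = i),
        ((if c = p.1 then (1:ℝ) else 0) - q p.1)| := Finset.abs_sum_le_sum_abs _ _
    _ ≤ ∑ c : Fin m, q c := by
        refine Finset.sum_le_sum fun c _ => ?_
        rw [abs_mul, abs_of_nonneg (hq0 c)]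
        have hp : |∏ p ∈ Finset.univ.filter (fun p => g p = i),
            ((if c = p.1 then (1:ℝ) else 0) - q p.1)| ≤ 1 := by
          rw [Finset.abs_prod]
          refine Finset.prod_le_one (fun p _ => abs_nonneg _) fun p _ => ?_
          exact abs_factor_le q hq0 hq1 c p.1
        nlinarith [hq0 c]
    _ = 1 := hq1

lemma eFac_eq_zero (q : Fin m → ℝ) (hq1 : ∑ j, q j = 1)
    (g : (Σ j : Fin m, Fin (α j)) → Fin n) (i : Fin n)
    (h : (Finset.univ.filter (fun p => g p = i)).card = 1) : eFac q g i = 0 := by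
  classical
  obtain ⟨p, hp⟩ := Finset.card_eq_one.1 h
  rw [eFac]
  rw [hp]
  simp only [Finset.prod_singleton]
  have : ∀ c : Fin m, q c * ((if c = p.1 then (1:ℝ) else 0) - q p.1)
      = (if c = p.1 then q c else 0) - q c * q p.1 := by
    intro c
    split_ifs <;> ring
  rw [Finset.sum_congr rfl fun c _ => this c, Finset.sum_sub_distrib,
    Finset.sum_ite_eq' Finset.univ p.1 q, ← Finset.sum_mul, hq1]
  simp

end



lemma count_bound (n : ℕ) (hn : 0 < n) (P : Type*) [Fintype P] [DecidableEq P] (s : ℕ)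
    (hs : Fintype.card P = s) :
    ((Finset.univ.filter (fun g : P → Fin n =>
        ∀ i : Fin n, (Finset.univ.filter (fun p => g p = i)).card ≠ 1)).card)
      ≤ (s / 2 + 1) * (s / 2) ^ s * n ^ (s / 2) := by
  classical
  set t := s / 2 with ht
  set G := Finset.univ.filter (fun g : P → Fin n =>
      ∀ i : Fin n, (Finset.univ.filter (fun p => g p = i)).card ≠ 1) with hG
  have himg : ∀ g ∈ G, (Finset.image g Finset.univ).card ≤ t := by
    intro g hg
    have hg' := (Finset.mem_filter.1 hg).2
    have hcard : s = ∑ i ∈ Finset.image g Finset.univ,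
        (Finset.univ.filter (fun p => g p = i)).card := by
      rw [← hs, ← Finset.card_univ]
      exact Finset.card_eq_sum_card_fiberwise fun p _ =>
        Finset.mem_image_of_mem g (Finset.mem_univ p)
    have h2 : ∀ i ∈ Finset.image g Finset.univ,
        2 ≤ (Finset.univ.filter (fun p => g p = i)).card := by
      intro i hi
      obtain ⟨p, _, hp⟩ := Finset.mem_image.1 hi
      have hmem : p ∈ Finset.univ.filter (fun p => g p = i) := by
        simp [hp]
      have h1 : 1 ≤ (Finset.univ.filter (fun p => g p = i)).card :=
        Finset.card_pos.2 ⟨p, hmem⟩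
      have := hg' i
      omega
    have hle : 2 * (Finset.image g Finset.univ).card ≤ s := by
      rw [hcard]
      calc 2 * (Finset.image g Finset.univ).card
          = ∑ _i ∈ Finset.image g Finset.univ, 2 := by
            rw [Finset.sum_const, smul_eq_mul]; ring
        _ ≤ _ := Finset.sum_le_sum h2
    omega
  set B := (Finset.univ : Finset (Fin n)).powerset.filter (fun T => T.card ≤ t) with hB
  have hsub : G ⊆ B.biUnion (fun T => Finset.univ.filter (fun g : P → Fin n => ∀ p, g p ∈ T)) := by
    intro g hg
    refine Finset.mem_biUnion.2 ⟨Finset.image g Finset.univ, ?_, ?_⟩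
    · exact Finset.mem_filter.2 ⟨Finset.mem_powerset.2 (Finset.subset_univ _), himg g hg⟩
    · exact Finset.mem_filter.2 ⟨Finset.mem_univ _,
        fun p => Finset.mem_image_of_mem g (Finset.mem_univ p)⟩
  have hfib : ∀ T : Finset (Fin n),
      (Finset.univ.filter (fun g : P → Fin n => ∀ p, g p ∈ T)).card = T.card ^ s := by
    intro T
    have : Finset.univ.filter (fun g : P → Fin n => ∀ p, g p ∈ T)
        = Fintype.piFinset (fun _ : P => T) := by
      ext g
      simp [Fintype.mem_piFinset]
    rw [this, Fintype.card_piFinset]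
    simp [hs]
  have hBcard : B.card ≤ (t + 1) * n ^ t := by
    have hsub2 : B ⊆ (Finset.range (t+1)).biUnion
        (fun k => Finset.powersetCard k (Finset.univ : Finset (Fin n))) := by
      intro T hT
      obtain ⟨h1, h2⟩ := Finset.mem_filter.1 hT
      exact Finset.mem_biUnion.2 ⟨T.card, Finset.mem_range.2 (by omega),
        Finset.mem_powersetCard.2 ⟨Finset.subset_univ _, rfl⟩⟩
    calc B.card ≤ ((Finset.range (t+1)).biUnion
          (fun k => Finset.powersetCard k (Finset.univ : Finset (Fin n)))).card :=
          Finset.card_le_card hsub2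
      _ ≤ ∑ k ∈ Finset.range (t+1), (Finset.powersetCard k (Finset.univ : Finset (Fin n))).card :=
          Finset.card_biUnion_le
      _ ≤ ∑ _k ∈ Finset.range (t+1), n ^ t := by
          refine Finset.sum_le_sum fun k hk => ?_
          rw [Finset.card_powersetCard, Finset.card_univ, Fintype.card_fin]
          calc n.choose k ≤ n ^ k := Nat.choose_le_pow n k
            _ ≤ n ^ t := Nat.pow_le_pow_right hn (by
                have := Finset.mem_range.1 hk; omega)
      _ = (t + 1) * n ^ t := by rw [Finset.sum_const, Finset.card_range, smul_eq_mul]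
  calc G.card ≤ (B.biUnion (fun T => Finset.univ.filter
        (fun g : P → Fin n => ∀ p, g p ∈ T))).card := Finset.card_le_card hsub
    _ ≤ ∑ T ∈ B, (Finset.univ.filter (fun g : P → Fin n => ∀ p, g p ∈ T)).card :=
        Finset.card_biUnion_le
    _ ≤ ∑ _T ∈ B, t ^ s := by
        refine Finset.sum_le_sum fun T hT => ?_
        rw [hfib T]
        exact Nat.pow_le_pow_left (Finset.mem_filter.1 hT).2 s
    _ = B.card * t ^ s := by rw [Finset.sum_const, smul_eq_mul]
    _ ≤ ((t + 1) * n ^ t) * t ^ s := Nat.mul_le_mul_right _ hBcard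
    _ = (t + 1) * t ^ s * n ^ t := by ring



lemma final_real_ineq (n s : ℕ) (hn : 0 < n) :
    (1 / n : ℝ) ^ s * (((s/2 + 1) * (s/2)^s * n^(s/2) : ℕ) : ℝ)
      ≤ ((((s/2 + 1) * (s/2)^s : ℕ) : ℝ) + 1) * (n : ℝ) ^ (-(s:ℝ)/2) := by
  have hx : (0:ℝ) < n := Nat.cast_pos.2 hn
  have hx1 : (1:ℝ) ≤ n := by exact_mod_cast hn
  set t := s / 2 with ht
  have hA : (0:ℝ) ≤ ((t + 1) * t ^ s : ℕ) := Nat.cast_nonneg _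
  have key : (1 / n : ℝ) ^ s * (n:ℝ) ^ t ≤ (n : ℝ) ^ (-(s:ℝ)/2) := by
    have h1 : (1 / n : ℝ) ^ s * (n:ℝ) ^ t = (n:ℝ) ^ ((t:ℝ) - (s:ℝ)) := by
      have ha : (1/n:ℝ)^s = ((n:ℝ)^((s:ℕ):ℝ))⁻¹ := by
        rw [one_div, inv_pow, Real.rpow_natCast]
      have hb : (n:ℝ)^t = (n:ℝ)^((t:ℕ):ℝ) := (Real.rpow_natCast _ _).symm
      rw [ha, hb, Real.rpow_sub hx, div_eq_mul_inv, mul_comm]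
    rw [h1]
    apply Real.rpow_le_rpow_of_exponent_le hx1
    have h2 : t * 2 ≤ s := Nat.div_mul_le_self s 2
    have h3 : (t:ℝ) * 2 ≤ (s:ℝ) := by exact_mod_cast h2
    linarith
  have expand : (1 / n : ℝ) ^ s * (((t + 1) * t^s * n^t : ℕ) : ℝ)
      = (((t + 1) * t ^ s : ℕ) : ℝ) * ((1 / n : ℝ) ^ s * (n:ℝ) ^ t) := by
    push_cast
    ring
  rw [expand]
  have h4 : (((t + 1) * t ^ s : ℕ) : ℝ) * ((1 / n : ℝ) ^ s * (n:ℝ) ^ t)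
      ≤ (((t + 1) * t ^ s : ℕ) : ℝ) * (n : ℝ) ^ (-(s:ℝ)/2) := by
    apply mul_le_mul_of_nonneg_left key hA
  refine h4.trans ?_
  apply mul_le_mul_of_nonneg_right (by linarith) (Real.rpow_nonneg hx.le _)

/-- Normalized centered multinomial moment bound: for `T ~ Multinomial(n,q)` and any
multi-index `α`, `|E[∏ⱼ (Tⱼ/n - qⱼ)^{αⱼ}]| ≤ C(α,m) · n^{-‖α‖₁/2}`. -/
theorem bernstein_normalized_moment_bound (m : ℕ) (α : Fin m → ℕ) :
    ∃ C : ℝ, 0 < C ∧ ∀ n : ℕ, 0 < n → ∀ q : Fin m → ℝ,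
      (∀ j, 0 ≤ q j) → (∑ j, q j = 1) →
      |∑ ν ∈ Finset.Nat.antidiagonalTuple m n,
          (∏ j, ((ν j : ℝ) / n - q j) ^ α j) * bernBasis ν q|
        ≤ C * (n : ℝ) ^ (-(∑ j, (α j : ℝ)) / 2) := by
  classical
  set s := ∑ j, α j with hs
  refine ⟨(((s/2 + 1) * (s/2)^s : ℕ) : ℝ) + 1, by positivity, ?_⟩
  intro n hn q hq0 hq1
  have hsum_cast : (∑ j, (α j : ℝ)) = (s:ℝ) := by rw [hs]; push_cast; rfl
  rw [hsum_cast]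
  have h1 : ∑ ν ∈ Finset.Nat.antidiagonalTuple m n,
      (∏ j, ((ν j : ℝ) / n - q j) ^ α j) * bernBasis ν q
      = ∑ ω : Fin n → Fin m, (∏ i, q (ω i)) * ∏ j, ((cntBB ω j : ℝ)/n - q j) ^ α j := by
    have := group_sum n m q (fun ν => ∏ j, ((ν j : ℝ)/n - q j) ^ α j)
    simpa [bernBasis] using this
  rw [h1]
  have hstep : ∑ ω : Fin n → Fin m, (∏ i, q (ω i)) * ∏ j, ((cntBB ω j : ℝ)/n - q j) ^ α j
      = (1/n : ℝ)^s * ∑ g : (Σ j : Fin m, Fin (α j)) → Fin n, ∏ i, eFac q g i := by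
    calc ∑ ω : Fin n → Fin m, (∏ i, q (ω i)) * ∏ j, ((cntBB ω j : ℝ)/n - q j) ^ α j
        = ∑ ω : Fin n → Fin m, (1/n : ℝ)^s * ((∏ i, q (ω i)) *
            ∑ g : (Σ j : Fin m, Fin (α j)) → Fin n,
              ∏ p : (Σ j : Fin m, Fin (α j)), ((if ω (g p) = p.1 then (1:ℝ) else 0) - q p.1)) := by
          refine Finset.sum_congr rfl fun ω _ => ?_
          rw [expand_prod n m hn q α ω]
          ring
      _ = (1/n : ℝ)^s * ∑ ω : Fin n → Fin m, ∑ g : (Σ j : Fin m, Fin (α j)) → Fin n,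
            (∏ i, q (ω i)) *
              ∏ p : (Σ j : Fin m, Fin (α j)), ((if ω (g p) = p.1 then (1:ℝ) else 0) - q p.1) := by
          rw [← Finset.mul_sum]
          congr 1
          exact Finset.sum_congr rfl fun ω _ => Finset.mul_sum _ _ _
      _ = (1/n : ℝ)^s * ∑ g : (Σ j : Fin m, Fin (α j)) → Fin n, ∑ ω : Fin n → Fin m,
            (∏ i, q (ω i)) *
              ∏ p : (Σ j : Fin m, Fin (α j)), ((if ω (g p) = p.1 then (1:ℝ) else 0) - q p.1) := by
          rw [Finset.sum_comm]
      _ = _ := by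
          congr 1
          exact Finset.sum_congr rfl fun g _ => Efactor q g
  rw [hstep]
  set Gprop : ((Σ j : Fin m, Fin (α j)) → Fin n) → Prop :=
    fun g => ∀ i : Fin n, (Finset.univ.filter (fun p => g p = i)).card ≠ 1 with hGprop
  have hfilter : ∑ g : (Σ j : Fin m, Fin (α j)) → Fin n, ∏ i, eFac q g i
      = ∑ g ∈ Finset.univ.filter Gprop, ∏ i, eFac q g i := by
    refine (Finset.sum_filter_of_ne ?_).symm
    intro g _ hne
    intro i
    by_contra hc
    exact hne (Finset.prod_eq_zero (Finset.mem_univ i) (eFac_eq_zero q hq1 g i hc))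
  rw [hfilter]
  have habs : |(1/n : ℝ)^s * ∑ g ∈ Finset.univ.filter Gprop, ∏ i, eFac q g i|
      ≤ (1/n : ℝ)^s * ((Finset.univ.filter Gprop).card : ℝ) := by
    rw [abs_mul]
    have hc0 : (0:ℝ) ≤ (1/n : ℝ)^s := by positivity
    rw [abs_of_nonneg hc0]
    apply mul_le_mul_of_nonneg_left _ hc0
    calc |∑ g ∈ Finset.univ.filter Gprop, ∏ i, eFac q g i|
        ≤ ∑ g ∈ Finset.univ.filter Gprop, |∏ i, eFac q g i| := Finset.abs_sum_le_sum_abs _ _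
      _ ≤ ∑ _g ∈ Finset.univ.filter Gprop, (1:ℝ) := by
          refine Finset.sum_le_sum fun g _ => ?_
          rw [Finset.abs_prod]
          exact Finset.prod_le_one (fun i _ => abs_nonneg _)
            (fun i _ => abs_eFac_le q hq0 hq1 g i)
      _ = ((Finset.univ.filter Gprop).card : ℝ) := by rw [Finset.sum_const]; simp
  refine habs.trans ?_
  have hcount : ((Finset.univ.filter Gprop).card : ℝ)
      ≤ (((s/2 + 1) * (s/2)^s * n^(s/2) : ℕ) : ℝ) := by
    have hcard : Fintype.card (Σ j : Fin m, Fin (α j)) = s := by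
      simp [hs]
    exact_mod_cast count_bound n hn (Σ j : Fin m, Fin (α j)) s hcard
  calc (1/n : ℝ)^s * ((Finset.univ.filter Gprop).card : ℝ)
      ≤ (1/n : ℝ)^s * (((s/2 + 1) * (s/2)^s * n^(s/2) : ℕ) : ℝ) := by
        apply mul_le_mul_of_nonneg_left hcount (by positivity)
    _ ≤ _ := final_real_ineq n s hn
end

section
/- Let X₁,...,Xₙ be i.i.d. random variables and ℓ a measurable function with L₁ ≤ ℓ ≤ L₂ for some 0 < L₁ ≤ L₂. Let A be a measurable set, μ = E[ℓ(X₁)], μ_A = E[ℓ(X₁)·1_A(X₁)], and define the plug-in posterior mass R = (n⁻¹∑ᵢ ℓ(Xᵢ)1_A(Xᵢ)) / (n⁻¹∑ᵢ ℓ(Xᵢ)). Then |E[R] - μ_A/μ| ≤ C(L₁,L₂)/n for a constant depending only on L₁, L₂. -/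
open MeasureTheory ProbabilityTheory

section Aux

variable {Ω : Type} [MeasurableSpace Ω] {μ : Measure Ω} [IsProbabilityMeasure μ]

private lemma int_of_abs_le {h : Ω → ℝ} (hm : AEStronglyMeasurable h μ) {C : ℝ}
    (hb : ∀ ω, |h ω| ≤ C) : Integrable h μ :=
  (integrable_const C).mono' hm (ae_of_all _ fun ω => by simpa [Real.norm_eq_abs] using hb ω)

private lemma abs_int_le {h : Ω → ℝ} {C : ℝ} (hb : ∀ ω, |h ω| ≤ C) :
    |∫ ω, h ω ∂μ| ≤ C := by
  have := norm_integral_le_of_norm_le_const (μ := μ) (f := h) (C := C)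
    (ae_of_all _ fun ω => by simpa [Real.norm_eq_abs] using hb ω)
  simpa [Real.norm_eq_abs] using this

private lemma alg_id (tt ss mA m : ℝ) (hss : ss ≠ 0) (hm : m ≠ 0) :
    tt/ss - mA/m = (1/m)*(tt - mA) + ((-(mA/m^2))*(ss - m)
      + ((-(1/m^2))*((tt-mA)*(ss-m)) + (1/m^2)*((tt/ss)*(ss-m)^2))) := by
  field_simp
  ring

omit [IsProbabilityMeasure μ] in
private lemma ident_int {X Y : Ω → ℝ} (hXm : Measurable X) (hYm : Measurable Y)
    (hid : Measure.map X μ = Measure.map Y μ) (h : ℝ → ℝ) (hh : Measurable h) :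
    ∫ ω, h (X ω) ∂μ = ∫ ω, h (Y ω) ∂μ := by
  rw [← integral_map hXm.aemeasurable hh.aestronglyMeasurable, hid,
    integral_map hYm.aemeasurable hh.aestronglyMeasurable]

private lemma cov_bound {n : ℕ} (X : Fin n → Ω → ℝ) (hX : ∀ i, Measurable (X i))
    (hindep : iIndepFun X μ)
    (i0 : Fin n) (hid : ∀ i, Measure.map (X i) μ = Measure.map (X i0) μ)
    (f g : ℝ → ℝ) (hf : Measurable f) (hg : Measurable g)
    (M : ℝ) (hfM : ∀ x, |f x| ≤ M) (hgM : ∀ x, |g x| ≤ M) :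
    |∫ ω, (((n:ℝ)⁻¹ * ∑ i, f (X i ω)) - ∫ ω', f (X i0 ω') ∂μ) *
          (((n:ℝ)⁻¹ * ∑ i, g (X i ω)) - ∫ ω', g (X i0 ω') ∂μ) ∂μ|
      ≤ 4 * M ^ 2 / n := by
  have hnpos : 0 < n := i0.pos
  have hn : (0:ℝ) < n := by exact_mod_cast hnpos
  have hn' : (n:ℝ) ≠ 0 := ne_of_gt hn
  set a := ∫ ω', f (X i0 ω') ∂μ with ha
  set b := ∫ ω', g (X i0 ω') ∂μ with hb
  have key : ∀ (h : ℝ → ℝ), Measurable h → ∀ i, ∫ ω, h (X i ω) ∂μ = ∫ ω, h (X i0 ω) ∂μ :=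
    fun h hh i => ident_int (hX i) (hX i0) (hid i) h hh
  have hM : 0 ≤ M := le_trans (abs_nonneg _) (hfM 0)
  have haM : |a| ≤ M := abs_int_le (fun ω => hfM _)
  have hbM : |b| ≤ M := abs_int_le (fun ω => hgM _)
  set u : Fin n → Ω → ℝ := fun i ω => f (X i ω) - a with hu
  set v : Fin n → Ω → ℝ := fun i ω => g (X i ω) - b with hv
  have humeas : ∀ i, Measurable (u i) := fun i => (hf.comp (hX i)).sub measurable_const
  have hvmeas : ∀ i, Measurable (v i) := fun i => (hg.comp (hX i)).sub measurable_const
  have hubd : ∀ i ω, |u i ω| ≤ 2 * M := by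
    intro i ω
    have h1 : |f (X i ω) - a| ≤ |f (X i ω)| + |a| := abs_sub _ _
    have := hfM (X i ω); simp only [hu]; linarith
  have hvbd : ∀ i ω, |v i ω| ≤ 2 * M := by
    intro i ω
    have h1 : |g (X i ω) - b| ≤ |g (X i ω)| + |b| := abs_sub _ _
    have := hgM (X i ω); simp only [hv]; linarith
  have huint : ∀ i, Integrable (u i) μ :=
    fun i => int_of_abs_le (humeas i).aestronglyMeasurable (hubd i)
  have hvint : ∀ i, Integrable (v i) μ :=
    fun i => int_of_abs_le (hvmeas i).aestronglyMeasurable (hvbd i)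
  have hfint : ∀ i, Integrable (fun ω => f (X i ω)) μ :=
    fun i => int_of_abs_le (hf.comp (hX i)).aestronglyMeasurable (fun ω => hfM _)
  have hu0 : ∀ i, ∫ ω, u i ω ∂μ = 0 := by
    intro i
    simp only [hu]
    rw [integral_sub (hfint i) (integrable_const a), key f hf i, integral_const]
    simp [← ha]
  have huvbd : ∀ i j (ω : Ω), |u i ω * v j ω| ≤ 4 * M ^ 2 := by
    intro i j ω
    calc |u i ω * v j ω| = |u i ω| * |v j ω| := abs_mul _ _
      _ ≤ (2*M) * (2*M) :=
        mul_le_mul (hubd i ω) (hvbd j ω) (abs_nonneg _) (by linarith)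
      _ = 4 * M ^ 2 := by ring
  have huvint : ∀ i j, Integrable (fun ω => u i ω * v j ω) μ :=
    fun i j => int_of_abs_le ((humeas i).mul (hvmeas j)).aestronglyMeasurable (huvbd i j)
  have off : ∀ i j, i ≠ j → ∫ ω, u i ω * v j ω ∂μ = 0 := by
    intro i j hij
    have hInd : IndepFun (u i) (v j) μ :=
      (hindep.indepFun hij).comp (hf.sub measurable_const) (hg.sub measurable_const)
    simpa [hu0 i] using hInd.integral_fun_mul_eq_mul_integral (huint i).aestronglyMeasurable (hvint j).aestronglyMeasurable
  set c := ∫ ω, u i0 ω * v i0 ω ∂μ with hc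
  have hcbd : |c| ≤ 4 * M ^ 2 := abs_int_le (huvbd i0 i0)
  have diag : ∀ i, ∫ ω, u i ω * v i ω ∂μ = c :=
    fun i => key (fun x => (f x - a) * (g x - b))
      ((hf.sub measurable_const).mul (hg.sub measurable_const)) i
  have hrw : ∀ ω : Ω, (((n:ℝ)⁻¹ * ∑ i, f (X i ω)) - a) * (((n:ℝ)⁻¹ * ∑ i, g (X i ω)) - b)
      = ∑ i, ∑ j, (((n:ℝ)⁻¹ * (n:ℝ)⁻¹) * (u i ω * v j ω)) := by
    intro ω
    have h1 : ((n:ℝ)⁻¹ * ∑ i, f (X i ω)) - a = (n:ℝ)⁻¹ * ∑ i, u i ω := by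
      simp only [hu]
      rw [Finset.sum_sub_distrib, Finset.sum_const, Finset.card_univ, Fintype.card_fin]
      field_simp
      rw [nsmul_eq_mul]
    have h2 : ((n:ℝ)⁻¹ * ∑ i, g (X i ω)) - b = (n:ℝ)⁻¹ * ∑ i, v i ω := by
      simp only [hv]
      rw [Finset.sum_sub_distrib, Finset.sum_const, Finset.card_univ, Fintype.card_fin]
      field_simp
      rw [nsmul_eq_mul]
    rw [h1, h2, Finset.mul_sum, Finset.mul_sum, Finset.sum_mul_sum]
    apply Finset.sum_congr rfl; intro i _
    apply Finset.sum_congr rfl; intro j _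
    ring
  have heq : (∫ ω, (((n:ℝ)⁻¹ * ∑ i, f (X i ω)) - a) *
      (((n:ℝ)⁻¹ * ∑ i, g (X i ω)) - b) ∂μ) = c / n := by
    rw [integral_congr_ae (ae_of_all _ hrw)]
    rw [integral_finset_sum _ (fun i _ => integrable_finset_sum _
      (fun j _ => (huvint i j).const_mul _))]
    have hinner : ∀ i : Fin n, (∫ ω, ∑ j, (((n:ℝ)⁻¹ * (n:ℝ)⁻¹) * (u i ω * v j ω)) ∂μ)
        = ((n:ℝ)⁻¹ * (n:ℝ)⁻¹) * c := by
      intro i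
      rw [integral_finset_sum _ (fun j _ => (huvint i j).const_mul _)]
      have hterm : ∀ j : Fin n, (∫ ω, ((n:ℝ)⁻¹ * (n:ℝ)⁻¹) * (u i ω * v j ω) ∂μ)
          = ((n:ℝ)⁻¹ * (n:ℝ)⁻¹) * ∫ ω, u i ω * v j ω ∂μ :=
        fun j => integral_const_mul _ _
      rw [Finset.sum_congr rfl (fun j _ => hterm j)]
      rw [Finset.sum_eq_single_of_mem i (Finset.mem_univ i)
        (fun j _ hji => by rw [off i j (Ne.symm hji), mul_zero])]
      rw [diag i]
    rw [Finset.sum_congr rfl (fun i _ => hinner i), Finset.sum_const, Finset.card_univ,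
      Fintype.card_fin, nsmul_eq_mul]
    field_simp
  rw [heq, abs_div, abs_of_nonneg (le_of_lt hn)]
  gcongr

private lemma ratio_bias {L₁ L₂ : ℝ} (hL₁ : 0 < L₁) (hL : L₁ ≤ L₂)
    {n : ℕ} (X : Fin n → Ω → ℝ) (hX : ∀ i, Measurable (X i))
    (hindep : iIndepFun X μ)
    (i0 : Fin n) (hid : ∀ i, Measure.map (X i) μ = Measure.map (X i0) μ)
    (f g : ℝ → ℝ) (hf : Measurable f) (hg : Measurable g)
    (hfb : ∀ x, L₁ ≤ f x ∧ f x ≤ L₂) (hgb : ∀ x, 0 ≤ g x ∧ g x ≤ f x) :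
    |(∫ ω, (((n:ℝ)⁻¹ * ∑ i, g (X i ω)) / ((n:ℝ)⁻¹ * ∑ i, f (X i ω))) ∂μ)
        - (∫ ω, g (X i0 ω) ∂μ) / (∫ ω, f (X i0 ω) ∂μ)|
      ≤ (8 * L₂ ^ 2 / L₁ ^ 2) / n := by
  have hnpos : 0 < n := i0.pos
  have hn : (0:ℝ) < n := by exact_mod_cast hnpos
  have hn' : (n:ℝ) ≠ 0 := ne_of_gt hn
  have hL₂ : 0 < L₂ := lt_of_lt_of_le hL₁ hL
  have habsf : ∀ x, |f x| ≤ L₂ := fun x => abs_le.mpr ⟨by linarith [(hfb x).1], (hfb x).2⟩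
  have habsg : ∀ x, |g x| ≤ L₂ := fun x => abs_le.mpr
    ⟨by linarith [(hgb x).1], le_trans (hgb x).2 (hfb x).2⟩
  set m := ∫ ω, f (X i0 ω) ∂μ with hmdef
  set mA := ∫ ω, g (X i0 ω) ∂μ with hmAdef
  -- basic measurability and integrability
  have hfXint : ∀ i, Integrable (fun ω => f (X i ω)) μ :=
    fun i => int_of_abs_le (hf.comp (hX i)).aestronglyMeasurable (fun ω => habsf _)
  have hgXint : ∀ i, Integrable (fun ω => g (X i ω)) μ :=
    fun i => int_of_abs_le (hg.comp (hX i)).aestronglyMeasurable (fun ω => habsg _)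
  have hSmeas : Measurable (fun ω => (n:ℝ)⁻¹ * ∑ i, f (X i ω)) :=
    measurable_const.mul (Finset.measurable_sum _ fun i _ => hf.comp (hX i))
  have hTmeas : Measurable (fun ω => (n:ℝ)⁻¹ * ∑ i, g (X i ω)) :=
    measurable_const.mul (Finset.measurable_sum _ fun i _ => hg.comp (hX i))
  -- pointwise bounds on the empirical means
  have hSlb : ∀ ω, L₁ ≤ (n:ℝ)⁻¹ * ∑ i, f (X i ω) := by
    intro ω
    have h1 : (n:ℝ) * L₁ ≤ ∑ i, f (X i ω) := by
      calc (n:ℝ)*L₁ = ∑ _i : Fin n, L₁ := by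
            rw [Finset.sum_const, Finset.card_univ, Fintype.card_fin, nsmul_eq_mul]
        _ ≤ ∑ i, f (X i ω) := Finset.sum_le_sum fun i _ => (hfb _).1
    calc L₁ = (n:ℝ)⁻¹ * ((n:ℝ) * L₁) := by field_simp
      _ ≤ (n:ℝ)⁻¹ * ∑ i, f (X i ω) :=
        mul_le_mul_of_nonneg_left h1 (inv_nonneg.mpr hn.le)
  have hSub : ∀ ω, (n:ℝ)⁻¹ * ∑ i, f (X i ω) ≤ L₂ := by
    intro ω
    have h1 : ∑ i, f (X i ω) ≤ (n:ℝ) * L₂ := by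
      calc ∑ i, f (X i ω) ≤ ∑ _i : Fin n, L₂ := Finset.sum_le_sum fun i _ => (hfb _).2
        _ = (n:ℝ)*L₂ := by
            rw [Finset.sum_const, Finset.card_univ, Fintype.card_fin, nsmul_eq_mul]
    calc (n:ℝ)⁻¹ * ∑ i, f (X i ω) ≤ (n:ℝ)⁻¹ * ((n:ℝ) * L₂) :=
        mul_le_mul_of_nonneg_left h1 (inv_nonneg.mpr hn.le)
      _ = L₂ := by field_simp
  have hSpos : ∀ ω, 0 < (n:ℝ)⁻¹ * ∑ i, f (X i ω) := fun ω => lt_of_lt_of_le hL₁ (hSlb ω)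
  have hSne : ∀ ω, (n:ℝ)⁻¹ * ∑ i, f (X i ω) ≠ 0 := fun ω => ne_of_gt (hSpos ω)
  have hT0 : ∀ ω, 0 ≤ (n:ℝ)⁻¹ * ∑ i, g (X i ω) := fun ω =>
    mul_nonneg (inv_nonneg.mpr hn.le) (Finset.sum_nonneg fun i _ => (hgb _).1)
  have hTS : ∀ ω, (n:ℝ)⁻¹ * ∑ i, g (X i ω) ≤ (n:ℝ)⁻¹ * ∑ i, f (X i ω) := fun ω =>
    mul_le_mul_of_nonneg_left (Finset.sum_le_sum fun i _ => (hgb _).2) (inv_nonneg.mpr hn.le)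
  have hTub : ∀ ω, (n:ℝ)⁻¹ * ∑ i, g (X i ω) ≤ L₂ := fun ω => le_trans (hTS ω) (hSub ω)
  -- ratio bounds
  have hR0 : ∀ ω, 0 ≤ ((n:ℝ)⁻¹ * ∑ i, g (X i ω)) / ((n:ℝ)⁻¹ * ∑ i, f (X i ω)) :=
    fun ω => div_nonneg (hT0 ω) (hSpos ω).le
  have hR1 : ∀ ω, ((n:ℝ)⁻¹ * ∑ i, g (X i ω)) / ((n:ℝ)⁻¹ * ∑ i, f (X i ω)) ≤ 1 :=
    fun ω => (div_le_one (hSpos ω)).mpr (hTS ω)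
  have hRmeas : Measurable (fun ω =>
      ((n:ℝ)⁻¹ * ∑ i, g (X i ω)) / ((n:ℝ)⁻¹ * ∑ i, f (X i ω))) := hTmeas.div hSmeas
  have hRabs : ∀ ω, |((n:ℝ)⁻¹ * ∑ i, g (X i ω)) / ((n:ℝ)⁻¹ * ∑ i, f (X i ω))| ≤ 1 :=
    fun ω => abs_le.mpr ⟨by linarith [hR0 ω], hR1 ω⟩
  have hRint : Integrable (fun ω =>
      ((n:ℝ)⁻¹ * ∑ i, g (X i ω)) / ((n:ℝ)⁻¹ * ∑ i, f (X i ω))) μ :=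
    int_of_abs_le hRmeas.aestronglyMeasurable hRabs
  -- bounds on m and mA
  have hm1 : L₁ ≤ m := by
    have := integral_mono (μ := μ) (integrable_const L₁) (hfXint i0)
      (fun ω => (hfb (X i0 ω)).1)
    simpa [← hmdef] using this
  have hm2 : m ≤ L₂ := by
    have := integral_mono (μ := μ) (hfXint i0) (integrable_const L₂)
      (fun ω => (hfb (X i0 ω)).2)
    simpa [← hmdef] using this
  have hmpos : 0 < m := lt_of_lt_of_le hL₁ hm1
  have hmne : m ≠ 0 := ne_of_gt hmpos
  have hmA0 : 0 ≤ mA := integral_nonneg (fun ω => (hgb _).1)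
  have hmAm : mA ≤ m := integral_mono (hgXint i0) (hfXint i0) (fun ω => (hgb _).2)
  -- empirical means have the right expectations
  have hSmean : ∫ ω, (n:ℝ)⁻¹ * ∑ i, f (X i ω) ∂μ = m := by
    rw [integral_const_mul, integral_finset_sum _ (fun i _ => hfXint i),
      Finset.sum_congr rfl (fun i _ => ident_int (hX i) (hX i0) (hid i) f hf),
      Finset.sum_const, Finset.card_univ, Fintype.card_fin, nsmul_eq_mul, ← hmdef]
    field_simp
  have hTmean : ∫ ω, (n:ℝ)⁻¹ * ∑ i, g (X i ω) ∂μ = mA := by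
    rw [integral_const_mul, integral_finset_sum _ (fun i _ => hgXint i),
      Finset.sum_congr rfl (fun i _ => ident_int (hX i) (hX i0) (hid i) g hg),
      Finset.sum_const, Finset.card_univ, Fintype.card_fin, nsmul_eq_mul, ← hmAdef]
    field_simp
  -- the four component functions
  set F1 : Ω → ℝ := fun ω => ((n:ℝ)⁻¹ * ∑ i, g (X i ω)) - mA with hF1def
  set F2 : Ω → ℝ := fun ω => ((n:ℝ)⁻¹ * ∑ i, f (X i ω)) - m with hF2def
  set F3 : Ω → ℝ := fun ω =>
    (((n:ℝ)⁻¹ * ∑ i, g (X i ω)) - mA) * (((n:ℝ)⁻¹ * ∑ i, f (X i ω)) - m) with hF3def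
  set F4 : Ω → ℝ := fun ω =>
    (((n:ℝ)⁻¹ * ∑ i, g (X i ω)) / ((n:ℝ)⁻¹ * ∑ i, f (X i ω))) *
      (((n:ℝ)⁻¹ * ∑ i, f (X i ω)) - m) ^ 2 with hF4def
  have hSint : Integrable (fun ω => (n:ℝ)⁻¹ * ∑ i, f (X i ω)) μ :=
    int_of_abs_le hSmeas.aestronglyMeasurable
      (fun ω => abs_le.mpr ⟨by linarith [hSlb ω], hSub ω⟩)
  have hTint : Integrable (fun ω => (n:ℝ)⁻¹ * ∑ i, g (X i ω)) μ :=
    int_of_abs_le hTmeas.aestronglyMeasurable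
      (fun ω => abs_le.mpr ⟨by linarith [hT0 ω], hTub ω⟩)
  have hF1int : Integrable F1 μ := hTint.sub (integrable_const mA)
  have hF2int : Integrable F2 μ := hSint.sub (integrable_const m)
  have hF1bd : ∀ ω, |F1 ω| ≤ 2 * L₂ := by
    intro ω; simp only [hF1def]
    have := hT0 ω; have := hTub ω
    rw [abs_le]; constructor <;> [skip; skip] <;> nlinarith [hmA0, le_trans hmAm hm2]
  have hF2bd : ∀ ω, |F2 ω| ≤ 2 * L₂ := by
    intro ω; simp only [hF2def]
    have := hSlb ω; have := hSub ω
    rw [abs_le]; constructor <;> nlinarith [hm1, hm2, hL₁, hL₂]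
  have hF3bd : ∀ ω, |F3 ω| ≤ 4 * L₂ ^ 2 := by
    intro ω; simp only [hF3def]
    rw [abs_mul]
    calc |F1 ω| * |F2 ω| ≤ (2 * L₂) * (2 * L₂) :=
        mul_le_mul (hF1bd ω) (hF2bd ω) (abs_nonneg _) (by linarith)
      _ = 4 * L₂ ^ 2 := by ring
  have hF3meas : Measurable F3 :=
    (hTmeas.sub measurable_const).mul (hSmeas.sub measurable_const)
  have hF3int : Integrable F3 μ := int_of_abs_le hF3meas.aestronglyMeasurable hF3bd
  have hF4bd : ∀ ω, |F4 ω| ≤ F2 ω * F2 ω := by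
    intro ω; simp only [hF4def, hF2def]
    rw [abs_mul, abs_pow, sq_abs, sq]
    have h1 := hRabs ω
    nlinarith [mul_self_nonneg (((n:ℝ)⁻¹ * ∑ i, f (X i ω)) - m),
      abs_nonneg (((n:ℝ)⁻¹ * ∑ i, g (X i ω)) / ((n:ℝ)⁻¹ * ∑ i, f (X i ω)))]
  have hF2sqbd : ∀ ω, |F2 ω * F2 ω| ≤ 4 * L₂ ^ 2 := by
    intro ω
    rw [abs_mul]
    calc |F2 ω| * |F2 ω| ≤ (2 * L₂) * (2 * L₂) :=
        mul_le_mul (hF2bd ω) (hF2bd ω) (abs_nonneg _) (by linarith)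
      _ = 4 * L₂ ^ 2 := by ring
  have hF4abs : ∀ ω, |F4 ω| ≤ 4 * L₂ ^ 2 :=
    fun ω => le_trans (hF4bd ω) (le_trans (le_abs_self _) (hF2sqbd ω))
  have hF4meas : Measurable F4 := hRmeas.mul ((hSmeas.sub measurable_const).pow_const 2)
  have hF4int : Integrable F4 μ := int_of_abs_le hF4meas.aestronglyMeasurable hF4abs
  have hF2sqint : Integrable (fun ω => F2 ω * F2 ω) μ :=
    int_of_abs_le ((hF2int.aestronglyMeasurable.mul hF2int.aestronglyMeasurable)) hF2sqbd
  -- zero means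
  have hF1zero : ∫ ω, F1 ω ∂μ = 0 := by
    simp only [hF1def]
    rw [integral_sub hTint (integrable_const mA), hTmean, integral_const]
    simp
  have hF2zero : ∫ ω, F2 ω ∂μ = 0 := by
    simp only [hF2def]
    rw [integral_sub hSint (integrable_const m), hSmean, integral_const]
    simp
  -- covariance bounds
  have hE1 : |∫ ω, F3 ω ∂μ| ≤ 4 * L₂ ^ 2 / n := by
    have h := cov_bound X hX hindep i0 hid g f hg hf L₂ habsg habsf
    rw [← hmAdef, ← hmdef] at h
    simpa only [hF3def] using h
  have hVar : (∫ ω, F2 ω * F2 ω ∂μ) ≤ 4 * L₂ ^ 2 / n := by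
    have h := cov_bound X hX hindep i0 hid f f hf hf L₂ habsf habsf
    rw [← hmdef] at h
    have h2 : (∫ ω, F2 ω * F2 ω ∂μ) = ∫ ω, (((n:ℝ)⁻¹ * ∑ i, f (X i ω)) - m) *
        (((n:ℝ)⁻¹ * ∑ i, f (X i ω)) - m) ∂μ := by simp only [hF2def]
    rw [h2]
    exact le_trans (le_abs_self _) h
  have hE2 : |∫ ω, F4 ω ∂μ| ≤ 4 * L₂ ^ 2 / n := by
    have hup : (∫ ω, F4 ω ∂μ) ≤ ∫ ω, F2 ω * F2 ω ∂μ :=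
      integral_mono hF4int hF2sqint (fun ω => le_trans (le_abs_self _) (hF4bd ω))
    have hlo : -(∫ ω, F2 ω * F2 ω ∂μ) ≤ ∫ ω, F4 ω ∂μ := by
      rw [← integral_neg]
      exact integral_mono hF2sqint.neg hF4int
        (fun ω => by have := (abs_le.mp (le_refl |F4 ω|)); have h := hF4bd ω
                     have := neg_abs_le (F4 ω); simp only [Pi.neg_apply]; linarith)
    have hnn : 0 ≤ ∫ ω, F2 ω * F2 ω ∂μ := integral_nonneg (fun ω => mul_self_nonneg _)
    rw [abs_le]
    constructor <;> linarith
  -- the pointwise algebraic identity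
  have hid_pt : ∀ ω, ((n:ℝ)⁻¹ * ∑ i, g (X i ω)) / ((n:ℝ)⁻¹ * ∑ i, f (X i ω)) - mA / m
      = (1/m) * F1 ω + ((-(mA/m^2)) * F2 ω + ((-(1/m^2)) * F3 ω + (1/m^2) * F4 ω)) := by
    intro ω
    simp only [hF1def, hF2def, hF3def, hF4def]
    exact alg_id _ _ _ _ (hSne ω) hmne
  -- put it together
  have e1 : (∫ ω, (((n:ℝ)⁻¹ * ∑ i, g (X i ω)) / ((n:ℝ)⁻¹ * ∑ i, f (X i ω))) ∂μ) - mA / m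
      = ∫ ω, ((((n:ℝ)⁻¹ * ∑ i, g (X i ω)) / ((n:ℝ)⁻¹ * ∑ i, f (X i ω))) - mA / m) ∂μ := by
    rw [integral_sub hRint (integrable_const _), integral_const]
    simp
  have e2 : (∫ ω, ((((n:ℝ)⁻¹ * ∑ i, g (X i ω)) / ((n:ℝ)⁻¹ * ∑ i, f (X i ω))) - mA / m) ∂μ)
      = (1/m) * (∫ ω, F1 ω ∂μ) + ((-(mA/m^2)) * (∫ ω, F2 ω ∂μ)
        + ((-(1/m^2)) * (∫ ω, F3 ω ∂μ) + (1/m^2) * (∫ ω, F4 ω ∂μ))) := by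
    rw [integral_congr_ae (ae_of_all _ hid_pt)]
    have h4 : Integrable (fun ω => (-(1/m^2)) * F3 ω + (1/m^2) * F4 ω) μ :=
      (hF3int.const_mul _).add (hF4int.const_mul _)
    have h3 : Integrable (fun ω => (-(mA/m^2)) * F2 ω
        + ((-(1/m^2)) * F3 ω + (1/m^2) * F4 ω)) μ := (hF2int.const_mul _).add h4
    rw [integral_add (hF1int.const_mul _) h3,
      integral_add (hF2int.const_mul _) h4,
      integral_add (hF3int.const_mul _) (hF4int.const_mul _),
      integral_const_mul, integral_const_mul, integral_const_mul, integral_const_mul]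
  have final : (∫ ω, (((n:ℝ)⁻¹ * ∑ i, g (X i ω)) / ((n:ℝ)⁻¹ * ∑ i, f (X i ω))) ∂μ) - mA / m
      = (-(1/m^2)) * (∫ ω, F3 ω ∂μ) + (1/m^2) * (∫ ω, F4 ω ∂μ) := by
    rw [e1, e2, hF1zero, hF2zero]
    ring
  have hmsq : (1:ℝ)/m^2 ≤ 1/L₁^2 := by
    apply one_div_le_one_div_of_le (by positivity)
    exact pow_le_pow_left₀ hL₁.le hm1 2
  have hmsq0 : (0:ℝ) ≤ 1/m^2 := by positivity
  calc |(∫ ω, (((n:ℝ)⁻¹ * ∑ i, g (X i ω)) / ((n:ℝ)⁻¹ * ∑ i, f (X i ω))) ∂μ) - mA / m|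
      = |(-(1/m^2)) * (∫ ω, F3 ω ∂μ) + (1/m^2) * (∫ ω, F4 ω ∂μ)| := by rw [final]
    _ ≤ |(-(1/m^2)) * (∫ ω, F3 ω ∂μ)| + |(1/m^2) * (∫ ω, F4 ω ∂μ)| := abs_add_le _ _
    _ = (1/m^2) * |∫ ω, F3 ω ∂μ| + (1/m^2) * |∫ ω, F4 ω ∂μ| := by
        rw [abs_mul, abs_mul, abs_neg, abs_of_nonneg hmsq0]
    _ ≤ (1/L₁^2) * (4 * L₂ ^ 2 / n) + (1/L₁^2) * (4 * L₂ ^ 2 / n) :=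
        add_le_add (mul_le_mul hmsq hE1 (abs_nonneg _) (by positivity))
          (mul_le_mul hmsq hE2 (abs_nonneg _) (by positivity))
    _ = (8 * L₂ ^ 2 / L₁ ^ 2) / n := by field_simp; ring

end Aux

/-- `O(n⁻¹)` bias of the plug-in posterior mass: with `0 < L₁ ≤ ℓ ≤ L₂`, i.i.d. samples
`X₁,...,Xₙ`, `μℓ = E[ℓ(X₁)]`, `μ_A = E[ℓ(X₁)1_A(X₁)]` and
`R = (n⁻¹∑ℓ(Xᵢ)1_A(Xᵢ))/(n⁻¹∑ℓ(Xᵢ))`, one has `|E[R] - μ_A/μℓ| ≤ C(L₁,L₂)/n`. -/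
theorem plugin_posterior_bias (L₁ L₂ : ℝ) (hL₁ : 0 < L₁) (hL : L₁ ≤ L₂) :
    ∃ C : ℝ, 0 < C ∧
      ∀ (Ω : Type) (_ : MeasurableSpace Ω) (μ : Measure Ω), IsProbabilityMeasure μ →
      ∀ (n : ℕ) (hn : 0 < n) (X : Fin n → Ω → ℝ) (ℓ : ℝ → ℝ) (A : Set ℝ),
        MeasurableSet A → Measurable ℓ → (∀ x, L₁ ≤ ℓ x ∧ ℓ x ≤ L₂) →
        (∀ i, Measurable (X i)) →
        iIndepFun X μ →
        (∀ i, Measure.map (X i) μ = Measure.map (X ⟨0, hn⟩) μ) →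
        |(∫ ω, (((n : ℝ)⁻¹ * ∑ i, ℓ (X i ω) * A.indicator (fun _ => (1 : ℝ)) (X i ω)) /
              ((n : ℝ)⁻¹ * ∑ i, ℓ (X i ω))) ∂μ)
            - (∫ ω, ℓ (X ⟨0, hn⟩ ω) * A.indicator (fun _ => (1 : ℝ)) (X ⟨0, hn⟩ ω) ∂μ) /
              (∫ ω, ℓ (X ⟨0, hn⟩ ω) ∂μ)|
          ≤ C / n := by
  have hL₂ : 0 < L₂ := lt_of_lt_of_le hL₁ hL
  refine ⟨8 * L₂ ^ 2 / L₁ ^ 2, by positivity, ?_⟩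
  intro Ω mΩ μ hμ n hn X ℓ A hA hℓ hℓb hX hindep hid
  haveI := hμ
  have hgb : ∀ x, 0 ≤ ℓ x * A.indicator (fun _ => (1:ℝ)) x ∧
      ℓ x * A.indicator (fun _ => (1:ℝ)) x ≤ ℓ x := by
    intro x
    have hℓx : 0 ≤ ℓ x := le_trans hL₁.le (hℓb x).1
    by_cases hx : x ∈ A <;> simp [Set.indicator_of_mem, Set.indicator_of_notMem, hx, hℓx]
  exact ratio_bias hL₁ hL X hX hindep ⟨0, hn⟩ hid ℓ
    (fun x => ℓ x * A.indicator (fun _ => (1:ℝ)) x) hℓ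
    (hℓ.mul (measurable_const.indicator hA)) hℓb hgb
end

section
/- In the same setting (L₁ ≤ ℓ ≤ L₂, R the plug-in posterior mass of a measurable set A based on n i.i.d. samples), Var(R) ≤ C(L₁,L₂)/n. -/
open MeasureTheory ProbabilityTheory

lemma aux_var_le {Ω : Type} [MeasurableSpace Ω] (μ : Measure Ω) [IsProbabilityMeasure μ]
    (f : Ω → ℝ) (hf : MemLp f 2 μ) (c : ℝ) :
    variance f μ ≤ ∫ ω, (f ω - c) ^ 2 ∂μ := by
  have hint : Integrable f μ := hf.integrable one_le_two
  have hsq : Integrable (fun ω => f ω ^ 2) μ := hf.integrable_sq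
  have hexp : ∫ ω, (f ω - c) ^ 2 ∂μ
      = (∫ ω, f ω ^ 2 ∂μ) - 2 * c * (∫ ω, f ω ∂μ) + c ^ 2 := by
    have h : ∀ ω, (f ω - c) ^ 2 = f ω ^ 2 - (2 * c) * f ω + c ^ 2 := fun ω => by ring
    have hsub : Integrable (fun ω => f ω ^ 2 - 2 * c * f ω) μ := hsq.sub (hint.const_mul _)
    have hcm : Integrable (fun ω => 2 * c * f ω) μ := hint.const_mul _
    simp_rw [h]
    rw [integral_add hsub (integrable_const _), integral_sub hsq hcm,
      integral_const_mul, integral_const]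
    simp [measure_univ]
  rw [variance_eq_sub hf, hexp]
  simp only [Pi.pow_apply]
  nlinarith [sq_nonneg ((∫ ω, f ω ∂μ) - c)]

lemma mean_var_le {Ω : Type} [MeasurableSpace Ω] (μ : Measure Ω) [IsProbabilityMeasure μ]
    (n : ℕ) (hn : 0 < n) (Y : Fin n → Ω → ℝ) (M : ℝ) (hM : 0 ≤ M)
    (hYm : ∀ i, Measurable (Y i)) (hYbd : ∀ i ω, |Y i ω| ≤ M)
    (hYind : ∀ i j, i ≠ j → IndepFun (Y i) (Y j) μ) :
    variance (fun ω => (n : ℝ)⁻¹ * ∑ i, Y i ω) μ ≤ M ^ 2 / n := by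
  have hn' : (0:ℝ) < n := Nat.cast_pos.2 hn
  have hne : (n:ℝ) ≠ 0 := hn'.ne'
  have hmem : ∀ i, MemLp (Y i) 2 μ := fun i =>
    MemLp.of_bound (hYm i).aestronglyMeasurable M (ae_of_all _ fun ω => by
      simpa [Real.norm_eq_abs] using hYbd i ω)
  have hvar : ∀ i, variance (Y i) μ ≤ M ^ 2 := by
    intro i
    refine (variance_le_expectation_sq (hYm i).aestronglyMeasurable).trans ?_
    have h2 : μ[(Y i) ^ 2] ≤ ∫ _ω, M ^ 2 ∂μ := by
      refine integral_mono (hmem i).integrable_sq (integrable_const _) fun ω => ?_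
      simp only [Pi.pow_apply]
      have h := hYbd i ω
      have h0 := abs_nonneg (Y i ω)
      nlinarith [sq_abs (Y i ω)]
    simpa using h2
  have hsum : variance (∑ i, Y i) μ = ∑ i, variance (Y i) μ :=
    IndepFun.variance_sum (fun i _ => hmem i) (fun i _ j _ hij => hYind i j hij)
  have heq : (fun ω => (n:ℝ)⁻¹ * ∑ i, Y i ω) = fun ω => (n:ℝ)⁻¹ * (∑ i, Y i) ω := by
    funext ω; simp
  calc variance (fun ω => (n:ℝ)⁻¹ * ∑ i, Y i ω) μ
      = ((n:ℝ)⁻¹) ^ 2 * variance (∑ i, Y i) μ := by rw [heq]; exact variance_const_mul _ _ μ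
    _ = ((n:ℝ)⁻¹) ^ 2 * ∑ i, variance (Y i) μ := by rw [hsum]
    _ ≤ ((n:ℝ)⁻¹) ^ 2 * (n * M ^ 2) := by
        refine mul_le_mul_of_nonneg_left ?_ (by positivity)
        calc ∑ i, variance (Y i) μ ≤ ∑ _i : Fin n, M ^ 2 :=
              Finset.sum_le_sum fun i _ => hvar i
          _ = n * M ^ 2 := by simp [Finset.sum_const, Finset.card_univ, nsmul_eq_mul]
    _ = M ^ 2 / n := by field_simp

lemma ratio_var_le {Ω : Type} [MeasurableSpace Ω] (μ : Measure Ω) [IsProbabilityMeasure μ]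
    (L₁ L₂ : ℝ) (hL₁ : 0 < L₁) (hL : L₁ ≤ L₂)
    (N D : Ω → ℝ) (hNm : Measurable N) (hDm : Measurable D)
    (hNbd : ∀ ω, 0 ≤ N ω ∧ N ω ≤ L₂) (hDbd : ∀ ω, L₁ ≤ D ω ∧ D ω ≤ L₂)
    (hND : ∀ ω, N ω ≤ D ω) :
    variance (fun ω => N ω / D ω) μ
      ≤ 2 * (L₂ / L₁ ^ 2) ^ 2 * (variance N μ + variance D μ) := by
  have hL₂ : 0 < L₂ := hL₁.trans_le hL
  have hmemN : MemLp N 2 μ := MemLp.of_bound hNm.aestronglyMeasurable L₂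
    (ae_of_all _ fun ω => by
      rw [Real.norm_eq_abs, abs_of_nonneg (hNbd ω).1]; exact (hNbd ω).2)
  have hmemD : MemLp D 2 μ := MemLp.of_bound hDm.aestronglyMeasurable L₂
    (ae_of_all _ fun ω => by
      rw [Real.norm_eq_abs, abs_of_nonneg (hL₁.le.trans (hDbd ω).1)]; exact (hDbd ω).2)
  have hIntN : Integrable N μ := hmemN.integrable one_le_two
  have hIntD : Integrable D μ := hmemD.integrable one_le_two
  set a := ∫ ω, N ω ∂μ with ha
  set b := ∫ ω, D ω ∂μ with hb
  have ha0 : 0 ≤ a := integral_nonneg fun ω => (hNbd ω).1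
  have haL : a ≤ L₂ := by
    have h := integral_mono hIntN (integrable_const L₂) fun ω => (hNbd ω).2
    simpa using h
  have hb1 : L₁ ≤ b := by
    have h := integral_mono (integrable_const L₁) hIntD fun ω => (hDbd ω).1
    simpa using h
  have hb2 : b ≤ L₂ := by
    have h := integral_mono hIntD (integrable_const L₂) fun ω => (hDbd ω).2
    simpa using h
  have hbpos : 0 < b := hL₁.trans_le hb1
  have hmemR : MemLp (fun ω => N ω / D ω) 2 μ :=
    MemLp.of_bound (hNm.div hDm).aestronglyMeasurable 1 (ae_of_all _ fun ω => by
      have hDpos : 0 < D ω := hL₁.trans_le (hDbd ω).1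
      rw [Real.norm_eq_abs, abs_of_nonneg (div_nonneg (hNbd ω).1 hDpos.le)]
      exact div_le_one_of_le₀ (hND ω) hDpos.le)
  have hmemNa : MemLp (fun ω => N ω - a) 2 μ := hmemN.sub (memLp_const a)
  have hmemDb : MemLp (fun ω => D ω - b) 2 μ := hmemD.sub (memLp_const b)
  have hIntu : Integrable (fun ω => (N ω - a) ^ 2) μ := hmemNa.integrable_sq
  have hIntv : Integrable (fun ω => (D ω - b) ^ 2) μ := hmemDb.integrable_sq
  have hIntRc : Integrable (fun ω => (N ω / D ω - a / b) ^ 2) μ :=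
    (hmemR.sub (memLp_const (a / b))).integrable_sq
  have hpoint : ∀ ω, (N ω / D ω - a / b) ^ 2
      ≤ 2 * (L₂ / L₁ ^ 2) ^ 2 * ((N ω - a) ^ 2 + (D ω - b) ^ 2) := by
    intro ω
    have hDpos : 0 < D ω := hL₁.trans_le (hDbd ω).1
    have hDle : D ω ≤ L₂ := (hDbd ω).2
    have hN0 : 0 ≤ N ω := (hNbd ω).1
    have hNle : N ω ≤ L₂ := (hNbd ω).2
    have hrw : N ω / D ω - a / b
        = (b * (N ω - a) - a * (D ω - b)) / (D ω * b) := by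
      field_simp
      ring
    rw [hrw, div_pow]
    have hprod : L₁ ^ 2 ≤ D ω * b := by nlinarith [(hDbd ω).1]
    have h1 : (L₁ ^ 2) ^ 2 ≤ (D ω * b) ^ 2 := by nlinarith
    have ha2 : a ^ 2 ≤ L₂ ^ 2 := by nlinarith
    have hb2' : b ^ 2 ≤ L₂ ^ 2 := by nlinarith
    have h2 : (b * (N ω - a) - a * (D ω - b)) ^ 2
        ≤ 2 * L₂ ^ 2 * ((N ω - a) ^ 2 + (D ω - b) ^ 2) := by
      nlinarith [sq_nonneg (b * (N ω - a) + a * (D ω - b)),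
        mul_nonneg (sub_nonneg.2 hb2') (sq_nonneg (N ω - a)),
        mul_nonneg (sub_nonneg.2 ha2) (sq_nonneg (D ω - b))]
    calc (b * (N ω - a) - a * (D ω - b)) ^ 2 / (D ω * b) ^ 2
        ≤ (2 * L₂ ^ 2 * ((N ω - a) ^ 2 + (D ω - b) ^ 2)) / (L₁ ^ 2) ^ 2 :=
          div_le_div₀ (by positivity) h2 (by positivity) h1
      _ = 2 * (L₂ / L₁ ^ 2) ^ 2 * ((N ω - a) ^ 2 + (D ω - b) ^ 2) := by
          field_simp
  have step1 : variance (fun ω => N ω / D ω) μ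
      ≤ ∫ ω, (N ω / D ω - a / b) ^ 2 ∂μ := aux_var_le μ _ hmemR _
  have step2 : ∫ ω, (N ω / D ω - a / b) ^ 2 ∂μ
      ≤ ∫ ω, 2 * (L₂ / L₁ ^ 2) ^ 2 * ((N ω - a) ^ 2 + (D ω - b) ^ 2) ∂μ :=
    integral_mono hIntRc ((hIntu.add hIntv).const_mul _) fun ω => hpoint ω
  have hIntuv : Integrable (fun ω => (N ω - a) ^ 2 + (D ω - b) ^ 2) μ := hIntu.add hIntv
  have step3 : ∫ ω, 2 * (L₂ / L₁ ^ 2) ^ 2 * ((N ω - a) ^ 2 + (D ω - b) ^ 2) ∂μ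
      = 2 * (L₂ / L₁ ^ 2) ^ 2
        * ((∫ ω, (N ω - a) ^ 2 ∂μ) + ∫ ω, (D ω - b) ^ 2 ∂μ) := by
    rw [integral_const_mul, integral_add hIntu hIntv]
  have hvarN : ∫ ω, (N ω - a) ^ 2 ∂μ = variance N μ := by
    rw [variance_eq_integral hNm.aemeasurable]
  have hvarD : ∫ ω, (D ω - b) ^ 2 ∂μ = variance D μ := by
    rw [variance_eq_integral hDm.aemeasurable]
  calc variance (fun ω => N ω / D ω) μ ≤ _ := step1
    _ ≤ _ := step2
    _ = _ := step3
    _ = 2 * (L₂ / L₁ ^ 2) ^ 2 * (variance N μ + variance D μ) := by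
        rw [hvarN, hvarD]

lemma avg_bounds (n : ℕ) (hn : 0 < n) (t : Fin n → ℝ) (lo hi : ℝ)
    (h : ∀ i, lo ≤ t i ∧ t i ≤ hi) :
    lo ≤ (n : ℝ)⁻¹ * ∑ i, t i ∧ (n : ℝ)⁻¹ * ∑ i, t i ≤ hi := by
  have hn' : (0:ℝ) < n := Nat.cast_pos.2 hn
  have h1 : (n : ℝ) * lo ≤ ∑ i, t i := by
    calc (n : ℝ) * lo = ∑ _i : Fin n, lo := by
          simp [Finset.sum_const, Finset.card_univ, nsmul_eq_mul]
      _ ≤ _ := Finset.sum_le_sum fun i _ => (h i).1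
  have h2 : ∑ i, t i ≤ (n : ℝ) * hi := by
    calc ∑ i, t i ≤ ∑ _i : Fin n, hi := Finset.sum_le_sum fun i _ => (h i).2
      _ = (n : ℝ) * hi := by simp [Finset.sum_const, Finset.card_univ, nsmul_eq_mul]
  constructor
  · have := mul_le_mul_of_nonneg_left h1 (inv_nonneg.2 hn'.le)
    rwa [inv_mul_cancel_left₀ hn'.ne'] at this
  · have := mul_le_mul_of_nonneg_left h2 (inv_nonneg.2 hn'.le)
    rwa [inv_mul_cancel_left₀ hn'.ne'] at this

/-- `O(n⁻¹)` variance of the plug-in posterior mass: with `0 < L₁ ≤ ℓ ≤ L₂`, i.i.d. samples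
`X₁,...,Xₙ` and `R = (n⁻¹∑ℓ(Xᵢ)1_A(Xᵢ))/(n⁻¹∑ℓ(Xᵢ))`, one has `Var(R) ≤ C(L₁,L₂)/n`. -/
theorem plugin_posterior_variance (L₁ L₂ : ℝ) (hL₁ : 0 < L₁) (hL : L₁ ≤ L₂) :
    ∃ C : ℝ, 0 < C ∧
      ∀ (Ω : Type) (_ : MeasurableSpace Ω) (μ : Measure Ω), IsProbabilityMeasure μ →
      ∀ (n : ℕ) (hn : 0 < n) (X : Fin n → Ω → ℝ) (ℓ : ℝ → ℝ) (A : Set ℝ),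
        MeasurableSet A → Measurable ℓ → (∀ x, L₁ ≤ ℓ x ∧ ℓ x ≤ L₂) →
        (∀ i, Measurable (X i)) →
        iIndepFun X μ →
        (∀ i, Measure.map (X i) μ = Measure.map (X ⟨0, hn⟩) μ) →
        variance (fun ω =>
            ((n : ℝ)⁻¹ * ∑ i, ℓ (X i ω) * A.indicator (fun _ => (1 : ℝ)) (X i ω)) /
              ((n : ℝ)⁻¹ * ∑ i, ℓ (X i ω))) μ
          ≤ C / n := by
  have hL₂ : 0 < L₂ := hL₁.trans_le hL
  refine ⟨4 * (L₂ / L₁ ^ 2) ^ 2 * L₂ ^ 2, by positivity, ?_⟩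
  intro Ω mΩ μ hμ n hn X ℓ A hA hmℓ hbd hmX hindep _hident
  set g1 : ℝ → ℝ := fun x => ℓ x * A.indicator (fun _ => (1 : ℝ)) x with hg1def
  have hg1m : Measurable g1 := hmℓ.mul (measurable_const.indicator hA)
  have hg1bd : ∀ x, 0 ≤ g1 x ∧ g1 x ≤ L₂ := by
    intro x
    by_cases hx : x ∈ A
    · simp only [hg1def, Set.indicator_of_mem hx, mul_one]
      exact ⟨hL₁.le.trans (hbd x).1, (hbd x).2⟩
    · simp only [hg1def, Set.indicator_of_notMem hx, mul_zero]
      exact ⟨le_refl 0, hL₂.le⟩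
  have hg1le : ∀ x, g1 x ≤ ℓ x := by
    intro x
    by_cases hx : x ∈ A
    · simp [hg1def, Set.indicator_of_mem hx]
    · simp only [hg1def, Set.indicator_of_notMem hx, mul_zero]
      exact hL₁.le.trans (hbd x).1
  -- variance bounds for numerator and denominator
  have hvN : variance (fun ω =>
      (n : ℝ)⁻¹ * ∑ i, ℓ (X i ω) * A.indicator (fun _ => (1 : ℝ)) (X i ω)) μ
      ≤ L₂ ^ 2 / n := by
    refine mean_var_le μ n hn (fun i ω => g1 (X i ω)) L₂ hL₂.le
      (fun i => hg1m.comp (hmX i))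
      (fun i ω => by
        rw [abs_of_nonneg (hg1bd (X i ω)).1]; exact (hg1bd (X i ω)).2)
      (fun i j hij => (hindep.indepFun hij).comp hg1m hg1m)
  have hvD : variance (fun ω => (n : ℝ)⁻¹ * ∑ i, ℓ (X i ω)) μ ≤ L₂ ^ 2 / n := by
    refine mean_var_le μ n hn (fun i ω => ℓ (X i ω)) L₂ hL₂.le
      (fun i => hmℓ.comp (hmX i))
      (fun i ω => abs_le.2 ⟨by linarith [(hbd (X i ω)).1], (hbd (X i ω)).2⟩)
      (fun i j hij => (hindep.indepFun hij).comp hmℓ hmℓ)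
  have hNm : Measurable (fun ω =>
      (n : ℝ)⁻¹ * ∑ i, ℓ (X i ω) * A.indicator (fun _ => (1 : ℝ)) (X i ω)) :=
    measurable_const.mul (Finset.measurable_sum _ fun i _ => (hg1m.comp (hmX i)))
  have hDm : Measurable (fun ω => (n : ℝ)⁻¹ * ∑ i, ℓ (X i ω)) :=
    measurable_const.mul (Finset.measurable_sum _ fun i _ => (hmℓ.comp (hmX i)))
  have hNbd : ∀ ω, 0 ≤ (n : ℝ)⁻¹ * ∑ i, ℓ (X i ω) * A.indicator (fun _ => (1 : ℝ)) (X i ω)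
      ∧ (n : ℝ)⁻¹ * ∑ i, ℓ (X i ω) * A.indicator (fun _ => (1 : ℝ)) (X i ω) ≤ L₂ :=
    fun ω => avg_bounds n hn _ 0 L₂ fun i => hg1bd (X i ω)
  have hDbd : ∀ ω, L₁ ≤ (n : ℝ)⁻¹ * ∑ i, ℓ (X i ω)
      ∧ (n : ℝ)⁻¹ * ∑ i, ℓ (X i ω) ≤ L₂ :=
    fun ω => avg_bounds n hn _ L₁ L₂ fun i => hbd (X i ω)
  have hND : ∀ ω, (n : ℝ)⁻¹ * ∑ i, ℓ (X i ω) * A.indicator (fun _ => (1 : ℝ)) (X i ω)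
      ≤ (n : ℝ)⁻¹ * ∑ i, ℓ (X i ω) := by
    intro ω
    have hn' : (0:ℝ) ≤ (n : ℝ)⁻¹ := by positivity
    exact mul_le_mul_of_nonneg_left
      (Finset.sum_le_sum fun i _ => hg1le (X i ω)) hn'
  have key := ratio_var_le μ L₁ L₂ hL₁ hL _ _ hNm hDm hNbd hDbd hND
  refine key.trans ?_
  have h2 : variance (fun ω =>
        (n : ℝ)⁻¹ * ∑ i, ℓ (X i ω) * A.indicator (fun _ => (1 : ℝ)) (X i ω)) μ
      + variance (fun ω => (n : ℝ)⁻¹ * ∑ i, ℓ (X i ω)) μ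
      ≤ L₂ ^ 2 / n + L₂ ^ 2 / n := add_le_add hvN hvD
  calc 2 * (L₂ / L₁ ^ 2) ^ 2 * (variance _ μ + variance _ μ)
      ≤ 2 * (L₂ / L₁ ^ 2) ^ 2 * (L₂ ^ 2 / n + L₂ ^ 2 / n) :=
        mul_le_mul_of_nonneg_left h2 (by positivity)
    _ = 4 * (L₂ / L₁ ^ 2) ^ 2 * L₂ ^ 2 / n := by ring
end
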